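/- arXiv:math/9204213 — 8 statements merged into one kernel-verified Lean document; each statement's English description precedes it below -/
import Mathlib

section
/- For 1 < p < ∞ the Mazur map M_p : S(ℓ_1) → S(ℓ_p), defined coordinatewise by M_p(h)_i = sign(h_i)·|h_i|^{1/p}, is a bijection whose inverse is given coordinatewise by x ↦ (sign(x_i)·|x_i|^p)_{i∈ℕ}, and both M_p and its inverse are uniformly continuous; that is, M_p is a uniform homeomorphism between the unit spheres of ℓ_1 and ℓ_p. -/
open scoped ENNReal

noncomputable section

namespace MazurAux

/-- The scalar Mazur map. -/
def mz (θ a : ℝ) : ℝ := Real.sign a * |a| ^ θ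

lemma mz_of_nonneg {θ a : ℝ} (hθ : 0 < θ) (ha : 0 ≤ a) : mz θ a = a ^ θ := by
  rcases eq_or_lt_of_le ha with h | h
  · simp [mz, ← h, Real.sign_zero, Real.zero_rpow hθ.ne']
  · rw [mz, Real.sign_of_pos h, abs_of_pos h, one_mul]

lemma mz_neg (θ a : ℝ) : mz θ (-a) = - mz θ a := by
  simp [mz, Real.sign_neg, abs_neg, neg_mul]

lemma abs_mz {θ : ℝ} (hθ : 0 < θ) (a : ℝ) : |mz θ a| = |a| ^ θ := by
  rcases lt_trichotomy a 0 with h | rfl | h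
  · rw [mz, Real.sign_of_neg h, neg_one_mul, abs_neg,
      abs_of_nonneg (Real.rpow_nonneg (abs_nonneg a) θ)]
  · simp [mz, Real.zero_rpow hθ.ne']
  · rw [mz, Real.sign_of_pos h, one_mul,
      abs_of_nonneg (Real.rpow_nonneg (abs_nonneg a) θ)]

lemma sign_mz {θ : ℝ} (hθ : 0 < θ) (a : ℝ) : Real.sign (mz θ a) = Real.sign a := by
  rcases lt_trichotomy a 0 with h | rfl | h
  · have h1 : (0:ℝ) < |a| ^ θ := Real.rpow_pos_of_pos (abs_pos.2 h.ne) θ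
    rw [mz, Real.sign_of_neg h, Real.sign_of_neg (by nlinarith)]
  · simp [mz]
  · have h1 : (0:ℝ) < |a| ^ θ := Real.rpow_pos_of_pos (abs_pos.2 h.ne') θ
    rw [mz, Real.sign_of_pos h, Real.sign_of_pos (by nlinarith)]

lemma sign_mul_abs (a : ℝ) : Real.sign a * |a| = a := by
  rcases lt_trichotomy a 0 with h | rfl | h
  · rw [Real.sign_of_neg h, abs_of_neg h]; ring
  · simp
  · rw [Real.sign_of_pos h, abs_of_pos h, one_mul]

lemma mz_mz {θ₁ θ₂ : ℝ} (h1 : 0 < θ₁) (h : θ₁ * θ₂ = 1) (a : ℝ) :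
    mz θ₂ (mz θ₁ a) = a := by
  rw [mz, sign_mz h1, abs_mz h1, ← Real.rpow_mul (abs_nonneg a), h, Real.rpow_one, sign_mul_abs]

lemma add_rpow_le {θ x y : ℝ} (hθ : 0 ≤ θ) (hθ1 : θ ≤ 1) (hx : 0 ≤ x) (hy : 0 ≤ y) :
    (x + y) ^ θ ≤ x ^ θ + y ^ θ := by
  have h := NNReal.rpow_add_le_add_rpow x.toNNReal y.toNNReal hθ hθ1
  have h2 := NNReal.coe_le_coe.2 h
  rwa [← Real.toNNReal_add hx hy, NNReal.coe_add, NNReal.coe_rpow, NNReal.coe_rpow,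
    NNReal.coe_rpow, Real.coe_toNNReal _ (by positivity), Real.coe_toNNReal _ hx,
    Real.coe_toNNReal _ hy] at h2

section IneqA

variable {θ : ℝ} (hθ : 0 < θ) (hθ1 : θ ≤ 1)
include hθ hθ1

lemma core1A {a b : ℝ} (hb : 0 ≤ b) (hba : b ≤ a) :
    |mz θ a - mz θ b| ≤ 2 * |a - b| ^ θ := by
  rw [mz_of_nonneg hθ (hb.trans hba), mz_of_nonneg hθ hb,
    abs_of_nonneg (sub_nonneg.2 (Real.rpow_le_rpow hb hba hθ.le)),
    abs_of_nonneg (sub_nonneg.2 hba)]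
  have h := add_rpow_le hθ.le hθ1 (sub_nonneg.2 hba) hb
  have e : a - b + b = a := by ring
  rw [e] at h
  nlinarith [Real.rpow_nonneg (sub_nonneg.2 hba : (0:ℝ) ≤ a - b) θ]

lemma core2A {a c : ℝ} (ha : 0 ≤ a) (hc : 0 ≤ c) :
    |mz θ a - mz θ (-c)| ≤ 2 * |a + c| ^ θ := by
  rw [mz_neg, sub_neg_eq_add, mz_of_nonneg hθ ha, mz_of_nonneg hθ hc,
    abs_of_nonneg (by positivity), abs_of_nonneg (by positivity)]
  have h1 : a ^ θ ≤ (a + c) ^ θ := Real.rpow_le_rpow ha (by linarith) hθ.le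
  have h2 : c ^ θ ≤ (a + c) ^ θ := Real.rpow_le_rpow hc (by linarith) hθ.le
  linarith

lemma bothA {a b : ℝ} (ha : 0 ≤ a) (hb : 0 ≤ b) :
    |mz θ a - mz θ b| ≤ 2 * |a - b| ^ θ := by
  rcases le_total b a with h | h
  · exact core1A hθ hθ1 hb h
  · rw [abs_sub_comm, abs_sub_comm a b]
    exact core1A hθ hθ1 ha h

lemma mz_sub_le (a b : ℝ) : |mz θ a - mz θ b| ≤ 2 * |a - b| ^ θ := by
  rcases le_total 0 a with ha | ha <;> rcases le_total 0 b with hb | hb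
  · exact bothA hθ hθ1 ha hb
  · have h := core2A hθ hθ1 ha (neg_nonneg.2 hb)
    rwa [neg_neg, ← sub_eq_add_neg] at h
  · have h := core2A hθ hθ1 hb (neg_nonneg.2 ha)
    rw [neg_neg, ← sub_eq_add_neg] at h
    rw [abs_sub_comm, abs_sub_comm a b]
    exact h
  · have h := bothA hθ hθ1 (neg_nonneg.2 ha) (neg_nonneg.2 hb)
    rw [mz_neg, mz_neg] at h
    have e1 : -mz θ a - -mz θ b = -(mz θ a - mz θ b) := by ring
    have e2 : -a - -b = -(a - b) := by ring
    rwa [e1, abs_neg, e2, abs_neg] at h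

end IneqA

lemma rpow_eq_mul {p a : ℝ} (hp : 1 ≤ p) (ha : 0 ≤ a) : a ^ p = a ^ (p - 1) * a := by
  rcases eq_or_lt_of_le ha with h | h
  · rw [← h, Real.zero_rpow (by linarith : p ≠ 0), mul_zero]
  · rw [← Real.rpow_add_one h.ne' (p - 1)]
    congr 1
    ring

section IneqB

variable {p : ℝ} (hp : 1 ≤ p)
include hp

lemma rpow_sub_le_mul {a b : ℝ} (hb : 0 ≤ b) (hba : b ≤ a) :
    a ^ p - b ^ p ≤ p * a ^ (p - 1) * (a - b) := by
  rcases eq_or_lt_of_le (hb.trans hba) with h | ha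
  · have hb0 : b = 0 := le_antisymm (h ▸ hba) hb
    rw [← h, hb0]
    simp [Real.zero_rpow (by linarith : p ≠ 0)]
  · set t := b / a with ht
    have ht0 : 0 ≤ t := div_nonneg hb ha.le
    have hber := one_add_mul_self_le_rpow_one_add (s := t - 1) (by linarith) hp
    have e : (1:ℝ) + (t - 1) = t := by ring
    rw [e] at hber
    have hap : (0:ℝ) < a ^ p := Real.rpow_pos_of_pos ha p
    have hbeq : b = t * a := by rw [ht, div_mul_cancel₀ b ha.ne']
    have hbp : b ^ p = t ^ p * a ^ p := by
      rw [hbeq, Real.mul_rpow ht0 ha.le]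
    have hmul : a ^ p = a ^ (p - 1) * a := rpow_eq_mul hp ha.le
    have h1 : (1 + p * (t - 1)) * a ^ p ≤ t ^ p * a ^ p :=
      mul_le_mul_of_nonneg_right hber hap.le
    have key : (t - 1) * a ^ p = a ^ (p - 1) * (b - a) := by
      rw [hmul, hbeq]; ring
    nlinarith [h1, hbp, key]

lemma core1B {a b : ℝ} (hb : 0 ≤ b) (hba : b ≤ a) :
    |mz p a - mz p b| ≤ p * (a ^ (p - 1) + b ^ (p - 1)) * (a - b) := by
  have hp0 : (0:ℝ) < p := by linarith
  rw [mz_of_nonneg hp0 (hb.trans hba), mz_of_nonneg hp0 hb,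
    abs_of_nonneg (sub_nonneg.2 (Real.rpow_le_rpow hb hba hp0.le))]
  have h := rpow_sub_le_mul hp hb hba
  have hb1 : (0:ℝ) ≤ b ^ (p - 1) := Real.rpow_nonneg hb _
  have hint : (0:ℝ) ≤ p * b ^ (p - 1) * (a - b) :=
    mul_nonneg (mul_nonneg hp0.le hb1) (sub_nonneg.2 hba)
  nlinarith [h, hint]

lemma core2B {a c : ℝ} (ha : 0 ≤ a) (hc : 0 ≤ c) :
    |mz p a - mz p (-c)| ≤ p * (a ^ (p - 1) + c ^ (p - 1)) * (a + c) := by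
  have hp0 : (0:ℝ) < p := by linarith
  rw [mz_neg, sub_neg_eq_add, mz_of_nonneg hp0 ha, mz_of_nonneg hp0 hc,
    abs_of_nonneg (by positivity)]
  have h1 : a ^ p = a ^ (p - 1) * a := rpow_eq_mul hp ha
  have h2 : c ^ p = c ^ (p - 1) * c := rpow_eq_mul hp hc
  have ha1 : (0:ℝ) ≤ a ^ (p - 1) := Real.rpow_nonneg ha _
  have hc1 : (0:ℝ) ≤ c ^ (p - 1) := Real.rpow_nonneg hc _
  have k1 : (0:ℝ) ≤ a ^ (p - 1) * c := mul_nonneg ha1 hc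
  have k2 : (0:ℝ) ≤ c ^ (p - 1) * a := mul_nonneg hc1 ha
  have k3 : (0:ℝ) ≤ (p - 1) * ((a ^ (p - 1) + c ^ (p - 1)) * (a + c)) :=
    mul_nonneg (by linarith) (mul_nonneg (by linarith) (by linarith))
  nlinarith [k1, k2, k3]

lemma bothB {a b : ℝ} (ha : 0 ≤ a) (hb : 0 ≤ b) :
    |mz p a - mz p b| ≤ p * (a ^ (p - 1) + b ^ (p - 1)) * |a - b| := by
  rcases le_total b a with h | h
  · rw [abs_of_nonneg (sub_nonneg.2 h)]
    exact core1B hp hb h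
  · rw [abs_sub_comm, abs_sub_comm a b, abs_of_nonneg (sub_nonneg.2 h)]
    calc |mz p b - mz p a| ≤ p * (b ^ (p-1) + a ^ (p-1)) * (b - a) := core1B hp ha h
      _ = p * (a ^ (p-1) + b ^ (p-1)) * (b - a) := by ring

lemma mz_sub_le' (a b : ℝ) :
    |mz p a - mz p b| ≤ p * (|a| ^ (p - 1) + |b| ^ (p - 1)) * |a - b| := by
  rcases le_total 0 a with ha | ha <;> rcases le_total 0 b with hb | hb
  · rw [abs_of_nonneg ha, abs_of_nonneg hb]
    exact bothB hp ha hb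
  · have h := core2B hp ha (neg_nonneg.2 hb)
    rw [neg_neg] at h
    rw [abs_of_nonneg ha, abs_of_nonpos hb]
    have e : |a - b| = a + -b := by
      rw [abs_of_nonneg (by linarith)]; ring
    rw [e]
    exact h
  · have h := core2B hp hb (neg_nonneg.2 ha)
    rw [neg_neg] at h
    have e : |b - a| = b + -a := by
      rw [abs_of_nonneg (by linarith)]; ring
    rw [abs_of_nonpos ha, abs_of_nonneg hb, abs_sub_comm, abs_sub_comm a b, e]
    exact h.trans_eq (by ring)
  · have h := bothB hp (neg_nonneg.2 ha) (neg_nonneg.2 hb)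
    rw [mz_neg, mz_neg] at h
    have e1 : -mz p a - -mz p b = -(mz p a - mz p b) := by ring
    have e2 : |(-a) - (-b)| = |a - b| := by
      have : (-a) - (-b) = -(a - b) := by ring
      rw [this, abs_neg]
    rw [e1, abs_neg, e2] at h
    rwa [abs_of_nonpos ha, abs_of_nonpos hb]

end IneqB

lemma young_step {p c u v : ℝ} (hp : 1 < p) (hc : 0 < c) (hu : 0 ≤ u) (hv : 0 ≤ v) :
    u ^ (p - 1) * v ≤ c ^ (p / (p - 1)) * u ^ p + v ^ p / c ^ p := by
  have hp0 : (0:ℝ) < p := by linarith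
  have hp1 : (0:ℝ) < p - 1 := by linarith
  have hconj : (p / (p - 1)).HolderConjugate p := (Real.HolderConjugate.conjExponent hp).symm
  set q' := p / (p - 1) with hq'
  have hq'1 : 1 < q' := hconj.lt
  have h := Real.young_inequality_of_nonneg
    (a := c * u ^ (p - 1)) (b := v / c) (by positivity) (by positivity) hconj
  have e0 : c * u ^ (p - 1) * (v / c) = u ^ (p - 1) * v := by
    field_simp
  have e1 : (c * u ^ (p - 1)) ^ q' = c ^ q' * u ^ p := by
    rw [Real.mul_rpow hc.le (Real.rpow_nonneg hu _), ← Real.rpow_mul hu]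
    congr 2
    rw [hq', mul_div_cancel₀ p hp1.ne']
  have e2 : (v / c) ^ p = v ^ p / c ^ p := Real.div_rpow hv hc.le p
  rw [e0, e1, e2] at h
  have d1 : c ^ q' * u ^ p / q' ≤ c ^ q' * u ^ p := div_le_self (by positivity) hq'1.le
  have d2 : v ^ p / c ^ p / p ≤ v ^ p / c ^ p := div_le_self (by positivity) hp.le
  linarith

end MazurAux

open MazurAux in
/-- The Mazur map `h ↦ (sign h_i · |h_i|^{1/p})` is a uniform homeomorphism from `S(ℓ_1)`
onto `S(ℓ_p)`, with inverse `x ↦ (sign x_i · |x_i|^p)`. -/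
theorem mazur_map_uniform_homeomorphism (p : ℝ) (hp : 1 < p)
    [Fact (1 ≤ ENNReal.ofReal p)] :
    ∃ (F : Metric.sphere (0 : lp (fun _ : ℕ => ℝ) 1) 1 →
          Metric.sphere (0 : lp (fun _ : ℕ => ℝ) (ENNReal.ofReal p)) 1)
      (G : Metric.sphere (0 : lp (fun _ : ℕ => ℝ) (ENNReal.ofReal p)) 1 →
          Metric.sphere (0 : lp (fun _ : ℕ => ℝ) 1) 1),
      (∀ h : Metric.sphere (0 : lp (fun _ : ℕ => ℝ) 1) 1, ∀ i : ℕ,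
        (F h : lp (fun _ : ℕ => ℝ) (ENNReal.ofReal p)) i =
          Real.sign ((h : lp (fun _ : ℕ => ℝ) 1) i) * |(h : lp (fun _ : ℕ => ℝ) 1) i| ^ (1 / p)) ∧
      (∀ x : Metric.sphere (0 : lp (fun _ : ℕ => ℝ) (ENNReal.ofReal p)) 1, ∀ i : ℕ,
        (G x : lp (fun _ : ℕ => ℝ) 1) i =
          Real.sign ((x : lp (fun _ : ℕ => ℝ) (ENNReal.ofReal p)) i) *
            |(x : lp (fun _ : ℕ => ℝ) (ENNReal.ofReal p)) i| ^ p) ∧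
      Function.LeftInverse G F ∧ Function.RightInverse G F ∧
      UniformContinuous F ∧ UniformContinuous G := by
  classical
  have hp0 : (0:ℝ) < p := lt_trans one_pos hp
  set E : ℕ → Type := fun _ : ℕ => ℝ with hE
  set q : ℝ≥0∞ := ENNReal.ofReal p with hqdef
  have hq : q.toReal = p := ENNReal.toReal_ofReal hp0.le
  have hq0 : 0 < q.toReal := by rw [hq]; exact hp0
  have h1t0 : (0:ℝ) < (1 : ℝ≥0∞).toReal := by simp
  have hθ0 : 0 < 1/p := by positivity
  have hθ1 : 1/p ≤ 1 := by
    rw [div_le_one hp0]; linarith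
  -- sum of norms in ℓ¹
  have sumNorm1 : ∀ f : lp E 1, ∑' i, ‖f i‖ = ‖f‖ := by
    intro f
    have h := lp.norm_rpow_eq_tsum h1t0 f
    simpa using h.symm
  have sumNormQ : ∀ x : lp E q, ∑' i, ‖x i‖ ^ p = ‖x‖ ^ p := by
    intro x
    have h := lp.norm_rpow_eq_tsum hq0 x
    rw [hq] at h
    exact h.symm
  -- memberships
  have memF : ∀ f : lp E 1, Memℓp (fun i => mz (1/p) (f i)) q := by
    intro f
    apply memℓp_gen
    have hs : Summable fun i => ‖f i‖ := by
      have := (lp.memℓp f).summable h1t0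
      simpa using this
    have he : ∀ i, ‖mz (1/p) (f i)‖ ^ q.toReal = ‖f i‖ := by
      intro i
      rw [hq, Real.norm_eq_abs, abs_mz hθ0, ← Real.rpow_mul (abs_nonneg _),
        one_div, inv_mul_cancel₀ hp0.ne', Real.rpow_one, Real.norm_eq_abs]
    simp only [he]
    exact hs
  have memG : ∀ x : lp E q, Memℓp (fun i => mz p (x i)) 1 := by
    intro x
    apply memℓp_gen
    have hs := (lp.memℓp x).summable hq0
    have he : ∀ i, ‖mz p (x i)‖ ^ (1:ℝ≥0∞).toReal = ‖x i‖ ^ q.toReal := by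
      intro i
      rw [ENNReal.toReal_one, Real.rpow_one, Real.norm_eq_abs, abs_mz hp0,
        Real.norm_eq_abs, hq]
    simp only [he]
    exact hs
  have rpow_eq_one : ∀ x : ℝ, 0 ≤ x → x ^ p = 1 → x = 1 := by
    intro x hx hxp
    have h : (x ^ p) ^ (1/p) = x := by
      rw [← Real.rpow_mul hx, mul_one_div, div_self hp0.ne', Real.rpow_one]
    rw [hxp, Real.one_rpow] at h
    exact h.symm
  -- norms of images
  have normF : ∀ f : lp E 1, ‖f‖ = 1 →
      ‖(⟨fun i => mz (1/p) (f i), memF f⟩ : lp E q)‖ = 1 := by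
    intro f hf
    apply rpow_eq_one _ (norm_nonneg _)
    have h := lp.norm_rpow_eq_tsum hq0 (⟨fun i => mz (1/p) (f i), memF f⟩ : lp E q)
    rw [hq] at h
    rw [h]
    have he : ∀ i : ℕ,
        ‖((⟨fun i => mz (1/p) (f i), memF f⟩ : lp E q) : ∀ _, ℝ) i‖ ^ p = ‖f i‖ := by
      intro i
      have : ((⟨fun i => mz (1/p) (f i), memF f⟩ : lp E q) : ∀ _, ℝ) i
          = mz (1/p) (f i) := rfl
      rw [this, Real.norm_eq_abs, abs_mz hθ0, ← Real.rpow_mul (abs_nonneg _),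
        one_div, inv_mul_cancel₀ hp0.ne', Real.rpow_one, Real.norm_eq_abs]
    rw [tsum_congr he, sumNorm1 f, hf]
  have normG : ∀ x : lp E q, ‖x‖ = 1 →
      ‖(⟨fun i => mz p (x i), memG x⟩ : lp E 1)‖ = 1 := by
    intro x hx
    have h := sumNorm1 (⟨fun i => mz p (x i), memG x⟩ : lp E 1)
    rw [← h]
    have he : ∀ i : ℕ,
        ‖((⟨fun i => mz p (x i), memG x⟩ : lp E 1) : ∀ _, ℝ) i‖ = ‖x i‖ ^ p := by
      intro i
      have : ((⟨fun i => mz p (x i), memG x⟩ : lp E 1) : ∀ _, ℝ) i = mz p (x i) := rfl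
      rw [this, Real.norm_eq_abs, abs_mz hp0, Real.norm_eq_abs]
    rw [tsum_congr he, sumNormQ x, hx, Real.one_rpow]
  -- the maps
  refine ⟨fun h => ⟨⟨fun i => mz (1/p) ((h : lp E 1) i), memF _⟩,
      mem_sphere_zero_iff_norm.2 (normF _ (mem_sphere_zero_iff_norm.1 h.2))⟩,
    fun x => ⟨⟨fun i => mz p ((x : lp E q) i), memG _⟩,
      mem_sphere_zero_iff_norm.2 (normG _ (mem_sphere_zero_iff_norm.1 x.2))⟩,
    ?_, ?_, ?_, ?_, ?_, ?_⟩
  · intro h i; rfl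
  · intro x i; rfl
  · -- LeftInverse
    intro h
    apply Subtype.ext
    apply lp.ext
    funext i
    exact mz_mz hθ0 (by field_simp) _
  · -- RightInverse
    intro x
    apply Subtype.ext
    apply lp.ext
    funext i
    exact mz_mz hp0 (by field_simp) _
  · -- UniformContinuous F
    rw [Metric.uniformContinuous_iff]
    intro ε hε
    refine ⟨(ε/2) ^ p, by positivity, ?_⟩
    intro a b hab
    rw [Subtype.dist_eq, dist_eq_norm] at hab
    rw [Subtype.dist_eq, dist_eq_norm]
    set f : lp E 1 := (a : lp E 1) with hf
    set g : lp E 1 := (b : lp E 1) with hg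
    set Fa : lp E q := ⟨fun i => mz (1/p) (f i), memF f⟩ with hFa
    set Fb : lp E q := ⟨fun i => mz (1/p) (g i), memF g⟩ with hFb
    have key : ‖Fa - Fb‖ ^ p ≤ 2 ^ p * ‖f - g‖ := by
      have h1 : ‖Fa - Fb‖ ^ p = ∑' i, ‖(Fa - Fb : ∀ _, ℝ) i‖ ^ p := by
        have := lp.norm_rpow_eq_tsum hq0 (Fa - Fb)
        rwa [hq] at this
      rw [h1]
      have hpt : ∀ i : ℕ, ‖(Fa - Fb : ∀ _, ℝ) i‖ ^ p ≤ 2 ^ p * ‖(f - g : ∀ _, ℝ) i‖ := by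
        intro i
        have hc : (Fa - Fb : ∀ _, ℝ) i = mz (1/p) (f i) - mz (1/p) (g i) := by
          rw [lp.coeFn_sub]; rfl
        have hc2 : (f - g : ∀ _, ℝ) i = f i - g i := by
          rw [lp.coeFn_sub]; rfl
        rw [hc, hc2, Real.norm_eq_abs, Real.norm_eq_abs]
        have hb := mz_sub_le hθ0 hθ1 (f i) (g i)
        have := Real.rpow_le_rpow (abs_nonneg _) hb hp0.le
        calc |mz (1/p) (f i) - mz (1/p) (g i)| ^ p
            ≤ (2 * |f i - g i| ^ (1/p)) ^ p := this
          _ = 2 ^ p * |f i - g i| := by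
              rw [Real.mul_rpow (by norm_num) (Real.rpow_nonneg (abs_nonneg _) _),
                ← Real.rpow_mul (abs_nonneg _), one_div, inv_mul_cancel₀ hp0.ne',
                Real.rpow_one]
      have hs1 : Summable fun i => ‖(Fa - Fb : ∀ _, ℝ) i‖ ^ p := by
        have := (lp.memℓp (Fa - Fb)).summable hq0
        rwa [hq] at this
      have hs2 : Summable fun i => 2 ^ p * ‖(f - g : ∀ _, ℝ) i‖ := by
        apply Summable.mul_left
        have := (lp.memℓp (f - g)).summable h1t0
        simpa using this
      calc ∑' i, ‖(Fa - Fb : ∀ _, ℝ) i‖ ^ p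
          ≤ ∑' i, 2 ^ p * ‖(f - g : ∀ _, ℝ) i‖ := hs1.tsum_le_tsum hpt hs2
        _ = 2 ^ p * ∑' i, ‖(f - g : ∀ _, ℝ) i‖ := tsum_mul_left
        _ = 2 ^ p * ‖f - g‖ := by rw [sumNorm1]
    have hlt : ‖Fa - Fb‖ ^ p < ε ^ p := by
      have h2 : (2:ℝ) ^ p * ‖f - g‖ < 2 ^ p * (ε/2) ^ p :=
        mul_lt_mul_of_pos_left hab (by positivity)
      have e : (2:ℝ) ^ p * (ε/2) ^ p = ε ^ p := by
        rw [← Real.mul_rpow (by norm_num) (by positivity)]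
        congr 1
        ring
      rw [e] at h2
      exact lt_of_le_of_lt key h2
    by_contra hcon
    push_neg at hcon
    exact absurd hlt (not_lt.2 (Real.rpow_le_rpow hε.le hcon hp0.le))
  · -- UniformContinuous G
    rw [Metric.uniformContinuous_iff]
    intro ε hε
    set q' : ℝ := p / (p - 1) with hq'
    have hq'1 : 1 < q' := by
      rw [hq', lt_div_iff₀ (by linarith)]
      linarith
    set c : ℝ := min 1 (ε / (8*p)) with hc
    have hc0 : 0 < c := lt_min one_pos (by positivity)
    have hc1 : c ≤ 1 := min_le_left _ _
    refine ⟨(ε * c ^ p / (8*p)) ^ (1/p), by positivity, ?_⟩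
    intro x y hxy
    rw [Subtype.dist_eq, dist_eq_norm] at hxy
    rw [Subtype.dist_eq, dist_eq_norm]
    set u : lp E q := (x : lp E q) with hu
    set v : lp E q := (y : lp E q) with hv
    have hux : ‖u‖ = 1 := mem_sphere_zero_iff_norm.1 x.2
    have hvy : ‖v‖ = 1 := mem_sphere_zero_iff_norm.1 y.2
    set Gx : lp E 1 := ⟨fun i => mz p (u i), memG u⟩ with hGx
    set Gy : lp E 1 := ⟨fun i => mz p (v i), memG v⟩ with hGy
    -- summabilities
    have hsu : Summable fun i => ‖u i‖ ^ p := by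
      have := (lp.memℓp u).summable hq0; rwa [hq] at this
    have hsv : Summable fun i => ‖v i‖ ^ p := by
      have := (lp.memℓp v).summable hq0; rwa [hq] at this
    have hsd : Summable fun i => ‖(u - v : ∀ _, ℝ) i‖ ^ p := by
      have := (lp.memℓp (u - v)).summable hq0; rwa [hq] at this
    have hsL : Summable fun i => ‖(Gx - Gy : ∀ _, ℝ) i‖ := by
      have := (lp.memℓp (Gx - Gy)).summable h1t0; simpa using this
    -- pointwise bound
    have hpt : ∀ i : ℕ, ‖(Gx - Gy : ∀ _, ℝ) i‖ ≤
        (p * c ^ q') * ‖u i‖ ^ p + (p * c ^ q') * ‖v i‖ ^ p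
          + (2 * p / c ^ p) * ‖(u - v : ∀ _, ℝ) i‖ ^ p := by
      intro i
      have hcG : (Gx - Gy : ∀ _, ℝ) i = mz p (u i) - mz p (v i) := by
        rw [lp.coeFn_sub]; rfl
      have hcd : (u - v : ∀ _, ℝ) i = u i - v i := by
        rw [lp.coeFn_sub]; rfl
      rw [hcG, hcd, Real.norm_eq_abs, Real.norm_eq_abs, Real.norm_eq_abs]
      have h1 := mz_sub_le' hp.le (u i) (v i)
      have h2 := young_step hp hc0 (abs_nonneg (u i)) (abs_nonneg (u i - v i))
      have h3 := young_step hp hc0 (abs_nonneg (v i)) (abs_nonneg (u i - v i))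
      have e : p * (|u i| ^ (p-1) + |v i| ^ (p-1)) * |u i - v i|
          = p * (|u i| ^ (p-1) * |u i - v i|) + p * (|v i| ^ (p-1) * |u i - v i|) := by
        ring
      rw [e] at h1
      have hd : (0:ℝ) ≤ |u i - v i| ^ p / c ^ p := by positivity
      calc |mz p (u i) - mz p (v i)|
          ≤ p * (|u i| ^ (p-1) * |u i - v i|) + p * (|v i| ^ (p-1) * |u i - v i|) := h1
        _ ≤ p * (c ^ q' * |u i| ^ p + |u i - v i| ^ p / c ^ p)
            + p * (c ^ q' * |v i| ^ p + |u i - v i| ^ p / c ^ p) := by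
            have := mul_le_mul_of_nonneg_left h2 hp0.le
            have := mul_le_mul_of_nonneg_left h3 hp0.le
            gcongr
        _ = (p * c ^ q') * |u i| ^ p + (p * c ^ q') * |v i| ^ p
            + (2 * p / c ^ p) * |u i - v i| ^ p := by
            field_simp
            ring
    -- summing up
    have hsum : ∑' i, ((p * c ^ q') * ‖u i‖ ^ p + (p * c ^ q') * ‖v i‖ ^ p
        + (2 * p / c ^ p) * ‖(u - v : ∀ _, ℝ) i‖ ^ p)
        = (p * c ^ q') + (p * c ^ q') + (2 * p / c ^ p) * ‖u - v‖ ^ p := by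
      rw [Summable.tsum_add (Summable.add (hsu.mul_left _) (hsv.mul_left _)) (hsd.mul_left _),
        Summable.tsum_add (hsu.mul_left _) (hsv.mul_left _),
        tsum_mul_left, tsum_mul_left, tsum_mul_left, sumNormQ u, sumNormQ v,
        sumNormQ (u - v), hux, hvy, Real.one_rpow, mul_one]
    have key : ‖Gx - Gy‖ ≤ (p * c ^ q') + (p * c ^ q') + (2 * p / c ^ p) * ‖u - v‖ ^ p := by
      rw [← sumNorm1 (Gx - Gy), ← hsum]
      exact hsL.tsum_le_tsum hpt
        ((Summable.add (hsu.mul_left _) (hsv.mul_left _)).add (hsd.mul_left _))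
    -- bound the two pieces
    have hb1 : p * c ^ q' ≤ ε / 8 := by
      have h1 : c ^ q' ≤ c := by
        have := Real.rpow_le_rpow_of_exponent_ge hc0 hc1 hq'1.le
        simpa using this
      have h2 : c ≤ ε / (8*p) := min_le_right _ _
      calc p * c ^ q' ≤ p * (ε / (8*p)) := by
            apply mul_le_mul_of_nonneg_left (h1.trans h2) hp0.le
        _ = ε / 8 := by field_simp
    have hb2 : (2 * p / c ^ p) * ‖u - v‖ ^ p < ε / 4 := by
      have hδp : ((ε * c ^ p / (8*p)) ^ (1/p)) ^ p = ε * c ^ p / (8*p) := by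
        rw [← Real.rpow_mul (by positivity), one_div, inv_mul_cancel₀ hp0.ne',
          Real.rpow_one]
      have h1 : ‖u - v‖ ^ p < ε * c ^ p / (8*p) := by
        rw [← hδp]
        exact Real.rpow_lt_rpow (norm_nonneg _) hxy hp0
      have hcp : (0:ℝ) < c ^ p := Real.rpow_pos_of_pos hc0 p
      calc (2 * p / c ^ p) * ‖u - v‖ ^ p
          < (2 * p / c ^ p) * (ε * c ^ p / (8*p)) :=
            mul_lt_mul_of_pos_left h1 (by positivity)
        _ = ε / 4 := by field_simp; ring
    calc ‖Gx - Gy‖ ≤ (p * c ^ q') + (p * c ^ q') + (2 * p / c ^ p) * ‖u - v‖ ^ p := key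
      _ < ε / 8 + ε / 8 + ε / 4 := by
          have := add_lt_add_of_le_of_lt (add_le_add hb1 hb1) hb2
          linarith
      _ < ε := by linarith
end
end

section
/- For all 1 ≤ p, q < ∞ the closed unit balls Ba(ℓ_p) and Ba(ℓ_q) are uniformly homeomorphic: there exists a bijection F : Ba(ℓ_p) → Ba(ℓ_q) such that both F and F^{-1} are uniformly continuous. -/
open scoped ENNReal

noncomputable section

namespace MazurAux

/-- The signed power function `t ↦ sign t * |t| ^ a`. -/
def phi (a t : ℝ) : ℝ := Real.sign t * |t| ^ a

lemma phi_zero (a : ℝ) : phi a 0 = 0 := by simp [phi]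

lemma phi_of_pos (a : ℝ) {t : ℝ} (ht : 0 < t) : phi a t = t ^ a := by
  simp [phi, Real.sign_of_pos ht, abs_of_pos ht]

lemma phi_neg (a t : ℝ) : phi a (-t) = - phi a t := by
  simp [phi, Real.sign_neg, abs_neg, neg_mul]

lemma phi_of_nonneg {a : ℝ} (ha : 0 < a) {t : ℝ} (ht : 0 ≤ t) : phi a t = t ^ a := by
  rcases ht.eq_or_lt with rfl | h
  · simp [phi, Real.zero_rpow ha.ne']
  · exact phi_of_pos a h

lemma abs_phi {a : ℝ} (ha : 0 < a) (t : ℝ) : |phi a t| = |t| ^ a := by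
  rcases eq_or_ne t 0 with rfl | h
  · simp [phi, Real.zero_rpow ha.ne']
  · rw [phi, abs_mul, abs_of_nonneg (Real.rpow_nonneg (abs_nonneg t) a)]
    rcases Real.sign_apply_eq_of_ne_zero t h with h1 | h1 <;> simp [h1]

lemma phi_one (t : ℝ) : phi 1 t = t := by
  rcases lt_trichotomy t 0 with h | rfl | h
  · rw [show t = -(-t) by ring, phi_neg, phi_of_pos 1 (by linarith)]; simp
  · simp [phi]
  · rw [phi_of_pos 1 h, Real.rpow_one]

lemma phi_phi {a b : ℝ} (ha : 0 < a) (hb : 0 < b) (t : ℝ) :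
    phi a (phi b t) = phi (b * a) t := by
  rcases eq_or_ne t 0 with rfl | h
  · simp [phi_zero]
  · have h1 : |t| ^ b > 0 := Real.rpow_pos_of_pos (abs_pos.2 h) b
    rcases Real.sign_apply_eq_of_ne_zero t h with hs | hs
    · have ht : t < 0 := by
        by_contra hc
        push_neg at hc
        rcases hc.eq_or_lt with rfl | hp
        · simp at h
        · rw [Real.sign_of_pos hp] at hs; norm_num at hs
      have : phi b t = -(|t| ^ b) := by rw [phi, hs]; ring
      rw [this, phi_neg, phi_of_pos a h1, ← Real.rpow_mul (abs_nonneg t), phi, hs]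
      ring
    · have : phi b t = |t| ^ b := by rw [phi, hs]; ring
      rw [this, phi_of_pos a h1, ← Real.rpow_mul (abs_nonneg t), phi, hs]
      ring

lemma phi_inv_phi {a : ℝ} (ha : 0 < a) (t : ℝ) : phi a⁻¹ (phi a t) = t := by
  rw [phi_phi (inv_pos.2 ha) ha, mul_inv_cancel₀ ha.ne', phi_one]

/-- Key pointwise estimate for `a ≤ 1`. -/
lemma phi_sub_le_of_le_one {a : ℝ} (ha : 0 < a) (ha1 : a ≤ 1) (t u : ℝ) :
    |phi a t - phi a u| ≤ 2 * |t - u| ^ a := by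
  -- first: the nonneg-nonneg case
  have nn : ∀ t u : ℝ, 0 ≤ u → u ≤ t → |phi a t - phi a u| ≤ 2 * |t - u| ^ a := by
    intro t u hu hut
    rw [phi_of_nonneg ha (hu.trans hut), phi_of_nonneg ha hu,
      abs_of_nonneg (sub_nonneg.2 (Real.rpow_le_rpow hu hut ha.le)),
      abs_of_nonneg (sub_nonneg.2 hut)]
    have key : t ^ a ≤ (t - u) ^ a + u ^ a := by
      have h2 := NNReal.rpow_add_le_add_rpow (t - u).toNNReal u.toNNReal ha.le ha1
      have h3 := (NNReal.coe_le_coe).2 h2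
      rw [← Real.toNNReal_add (sub_nonneg.2 hut) hu] at h3
      push_cast [NNReal.coe_rpow, Real.coe_toNNReal _ (sub_nonneg.2 hut),
        Real.coe_toNNReal _ hu,
        Real.coe_toNNReal _ (by linarith : (0:ℝ) ≤ t - u + u)] at h3
      simpa using h3
    have k1 : (0:ℝ) ≤ (t - u) ^ a := Real.rpow_nonneg (sub_nonneg.2 hut) a
    have k2 : (0:ℝ) ≤ u ^ a := Real.rpow_nonneg hu a
    linarith
  -- mixed case
  have mixed : ∀ t u : ℝ, u ≤ 0 → 0 ≤ t → |phi a t - phi a u| ≤ 2 * |t - u| ^ a := by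
    intro t u hu ht
    have h1 : phi a u = -((-u) ^ a) := by
      rw [show u = -(-u) by ring, phi_neg, phi_of_nonneg ha (by linarith)]
      ring_nf
    rw [phi_of_nonneg ha ht, h1, sub_neg_eq_add,
      abs_of_nonneg (add_nonneg (Real.rpow_nonneg ht a)
        (Real.rpow_nonneg (by linarith : (0:ℝ) ≤ -u) a)),
      abs_of_nonneg (by linarith : (0:ℝ) ≤ t - u)]
    have e1 : t ^ a ≤ (t - u) ^ a := Real.rpow_le_rpow ht (by linarith) ha.le
    have e2 : (-u) ^ a ≤ (t - u) ^ a := Real.rpow_le_rpow (by linarith) (by linarith) ha.le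
    linarith
  rcases le_total 0 t with ht | ht <;> rcases le_total 0 u with hu | hu
  · rcases le_total u t with h | h
    · exact nn t u hu h
    · rw [abs_sub_comm, abs_sub_comm t u]; exact nn u t ht h
  · exact mixed t u hu ht
  · rw [abs_sub_comm, abs_sub_comm t u]; exact mixed u t ht hu
  · have key : ∀ t u : ℝ, t ≤ 0 → u ≤ 0 → t ≤ u → |phi a t - phi a u| ≤ 2 * |t - u| ^ a := by
      intro t u ht hu htu
      have := nn (-t) (-u) (by linarith) (by linarith)
      rw [phi_neg, phi_neg] at this
      calc |phi a t - phi a u| = |(- phi a t) - (- phi a u)| := by rw [← abs_neg]; ring_nf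
      _ ≤ 2 * |(-t) - (-u)| ^ a := this
      _ = 2 * |t - u| ^ a := by rw [show (-t) - (-u) = -(t - u) by ring, abs_neg]
    rcases le_total t u with h | h
    · exact key t u ht hu h
    · rw [abs_sub_comm, abs_sub_comm t u]; exact key u t hu ht h

/-- Key pointwise estimate for `a ≥ 1`. -/
lemma phi_sub_le_of_one_le {a : ℝ} (ha1 : 1 ≤ a) (t u : ℝ) :
    |phi a t - phi a u| ≤ a * (|t| ^ (a - 1) + |u| ^ (a - 1)) * |t - u| := by
  have ha : (0:ℝ) < a := lt_of_lt_of_le one_pos ha1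
  -- nonneg-nonneg case
  have nn : ∀ t u : ℝ, 0 ≤ u → u ≤ t →
      |phi a t - phi a u| ≤ a * (|t| ^ (a - 1) + |u| ^ (a - 1)) * |t - u| := by
    intro t u hu hut
    have ht : 0 ≤ t := hu.trans hut
    rw [phi_of_nonneg ha ht, phi_of_nonneg ha hu,
      abs_of_nonneg (sub_nonneg.2 (Real.rpow_le_rpow hu hut ha.le)),
      abs_of_nonneg ht, abs_of_nonneg hu, abs_of_nonneg (sub_nonneg.2 hut)]
    rcases ht.eq_or_lt with rfl | htp
    · have : u = 0 := le_antisymm hut hu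
      subst this
      simp
    -- Bernoulli: 1 + a * (u/t - 1) ≤ (u/t) ^ a
    · have hb : -1 ≤ u / t - 1 := by
        have : 0 ≤ u / t := div_nonneg hu htp.le
        linarith
      have bern := one_add_mul_self_le_rpow_one_add hb ha1
      rw [show (1 : ℝ) + (u / t - 1) = u / t by ring] at bern
      have hta : (0:ℝ) < t ^ a := Real.rpow_pos_of_pos htp a
      have key : t ^ a - u ^ a ≤ a * t ^ (a - 1) * (t - u) := by
        have h2 : t ^ a * (1 + a * (u / t - 1)) ≤ t ^ a * ((u / t) ^ a) :=
          mul_le_mul_of_nonneg_left bern hta.le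
        have h2' : t ^ a * ((u / t) ^ a) = u ^ a := by
          rw [← Real.mul_rpow htp.le (div_nonneg hu htp.le),
            mul_div_cancel₀ _ htp.ne']
        rw [h2'] at h2
        have h3 : t ^ (a - 1) * t = t ^ a := by
          rw [← Real.rpow_add_one htp.ne' (a - 1)]
          norm_num
        have h4 : t ^ a * (a * (u / t - 1)) = a * t ^ (a-1) * (u - t) := by
          rw [← h3]
          field_simp
        nlinarith
      have hle : a * t ^ (a-1) * (t - u) ≤ a * (t ^ (a-1) + u ^ (a-1)) * (t - u) := by
        have h5 : (0:ℝ) ≤ a * u ^ (a-1) * (t - u) :=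
          mul_nonneg (mul_nonneg ha.le (Real.rpow_nonneg hu _)) (sub_nonneg.2 hut)
        nlinarith
      linarith
  -- mixed case
  have mixed : ∀ t u : ℝ, u ≤ 0 → 0 ≤ t →
      |phi a t - phi a u| ≤ a * (|t| ^ (a - 1) + |u| ^ (a - 1)) * |t - u| := by
    intro t u hu ht
    have h1 : phi a u = -((-u) ^ a) := by
      rw [show u = -(-u) by ring, phi_neg, phi_of_nonneg ha (by linarith)]
      ring_nf
    rw [phi_of_nonneg ha ht, h1, sub_neg_eq_add,
      abs_of_nonneg (add_nonneg (Real.rpow_nonneg ht a)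
        (Real.rpow_nonneg (by linarith : (0:ℝ) ≤ -u) a)),
      abs_of_nonneg ht, abs_of_nonpos hu, abs_of_nonneg (by linarith : (0:ℝ) ≤ t - u)]
    have base : ∀ v : ℝ, 0 ≤ v → v ^ a = v ^ (a-1) * v := by
      intro v hv
      rcases hv.eq_or_lt with rfl | hvp
      · rcases eq_or_lt_of_le ha1 with rfl | h
        · norm_num
        · rw [Real.zero_rpow (ne_of_gt ha), Real.zero_rpow (sub_ne_zero.2 h.ne')]
          ring
      · rw [← Real.rpow_add_one hvp.ne' (a - 1)]
        norm_num
    have e1 : t ^ a ≤ t ^ (a-1) * (t - u) := by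
      rw [base t ht]
      exact mul_le_mul_of_nonneg_left (by linarith) (Real.rpow_nonneg ht _)
    have e2 : (-u) ^ a ≤ (-u) ^ (a-1) * (t - u) := by
      rw [base (-u) (by linarith)]
      exact mul_le_mul_of_nonneg_left (by linarith) (Real.rpow_nonneg (by linarith) _)
    have hta : (0:ℝ) ≤ t ^ (a-1) := Real.rpow_nonneg ht _
    have hua : (0:ℝ) ≤ (-u) ^ (a-1) := Real.rpow_nonneg (by linarith) _
    have h6 : (0:ℝ) ≤ (t ^ (a-1) + (-u) ^ (a-1)) * (t - u) :=
      mul_nonneg (add_nonneg hta hua) (by linarith)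
    nlinarith [mul_nonneg (sub_nonneg.2 ha1) h6]
  rcases le_total 0 t with ht | ht <;> rcases le_total 0 u with hu | hu
  · rcases le_total u t with h | h
    · exact nn t u hu h
    · rw [abs_sub_comm, abs_sub_comm t u, add_comm (|t| ^ (a-1))]; exact nn u t ht h
  · exact mixed t u hu ht
  · rw [abs_sub_comm, abs_sub_comm t u, add_comm (|t| ^ (a-1))]; exact mixed u t ht hu
  · have key : ∀ t u : ℝ, t ≤ 0 → u ≤ 0 → t ≤ u →
        |phi a t - phi a u| ≤ a * (|t| ^ (a-1) + |u| ^ (a-1)) * |t - u| := by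
      intro t u ht hu htu
      have := nn (-t) (-u) (by linarith) (by linarith)
      rw [phi_neg, phi_neg, abs_neg, abs_neg] at this
      calc |phi a t - phi a u| = |(- phi a t) - (- phi a u)| := by rw [← abs_neg]; ring_nf
      _ ≤ a * (|t| ^ (a-1) + |u| ^ (a-1)) * |(-t) - (-u)| := this
      _ = a * (|t| ^ (a-1) + |u| ^ (a-1)) * |t - u| := by
          rw [show (-t) - (-u) = -(t - u) by ring, abs_neg]
    rcases le_total t u with h | h
    · exact key t u ht hu h
    · rw [abs_sub_comm, abs_sub_comm t u, add_comm (|t| ^ (a-1))]; exact key u t hu ht h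

end MazurAux

namespace MazurAux

variable {p q : ℝ≥0∞}

lemma toReal_one_le (hp : 1 ≤ p) (hp' : p ≠ ⊤) : 1 ≤ p.toReal := by
  simpa using ENNReal.toReal_mono hp' hp

lemma memℓp_mazur (hp : 1 ≤ p) (hp' : p ≠ ⊤) (hq : 1 ≤ q) (hq' : q ≠ ⊤)
    (x : lp (fun _ : ℕ => ℝ) p) :
    Memℓp (fun i => phi (p.toReal / q.toReal) (x i)) q := by
  have hr : 1 ≤ p.toReal := toReal_one_le hp hp'
  have hs : 1 ≤ q.toReal := toReal_one_le hq hq'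
  apply memℓp_gen
  have key : ∀ i, ‖phi (p.toReal / q.toReal) (x i)‖ ^ q.toReal = ‖x i‖ ^ p.toReal := by
    intro i
    rw [Real.norm_eq_abs, abs_phi (by positivity) (x i), Real.norm_eq_abs,
      ← Real.rpow_mul (abs_nonneg _), div_mul_cancel₀ _ (by positivity : q.toReal ≠ 0)]
  simp_rw [key]
  exact (lp.memℓp x).summable (by positivity)

/-- The Mazur map from `ℓ_p` to `ℓ_q`. -/
def mazurMap (p q : ℝ≥0∞) (hp : 1 ≤ p) (hp' : p ≠ ⊤) (hq : 1 ≤ q) (hq' : q ≠ ⊤)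
    (x : lp (fun _ : ℕ => ℝ) p) : lp (fun _ : ℕ => ℝ) q :=
  ⟨fun i => phi (p.toReal / q.toReal) (x i), memℓp_mazur hp hp' hq hq' x⟩

lemma mazurMap_apply (hp : 1 ≤ p) (hp' : p ≠ ⊤) (hq : 1 ≤ q) (hq' : q ≠ ⊤)
    (x : lp (fun _ : ℕ => ℝ) p) (i : ℕ) :
    mazurMap p q hp hp' hq hq' x i = phi (p.toReal / q.toReal) (x i) := rfl

lemma mazurMap_mazurMap (hp : 1 ≤ p) (hp' : p ≠ ⊤) (hq : 1 ≤ q) (hq' : q ≠ ⊤)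
    (x : lp (fun _ : ℕ => ℝ) p) :
    mazurMap q p hq hq' hp hp' (mazurMap p q hp hp' hq hq' x) = x := by
  have hr : 1 ≤ p.toReal := toReal_one_le hp hp'
  have hs : 1 ≤ q.toReal := toReal_one_le hq hq'
  ext i
  rw [mazurMap_apply, mazurMap_apply, phi_phi (by positivity) (by positivity),
    div_mul_div_comm, mul_comm q.toReal p.toReal, div_self (by positivity), phi_one]

lemma norm_mazurMap [Fact (1 ≤ p)] [Fact (1 ≤ q)] (hp : 1 ≤ p) (hp' : p ≠ ⊤) (hq : 1 ≤ q) (hq' : q ≠ ⊤)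
    (x : lp (fun _ : ℕ => ℝ) p) :
    ‖mazurMap p q hp hp' hq hq' x‖ = ‖x‖ ^ (p.toReal / q.toReal) := by
  have hr : 1 ≤ p.toReal := toReal_one_le hp hp'
  have hs : 1 ≤ q.toReal := toReal_one_le hq hq'
  rw [lp.norm_eq_tsum_rpow (by positivity) (mazurMap p q hp hp' hq hq' x)]
  have key : ∀ i, ‖mazurMap p q hp hp' hq hq' x i‖ ^ q.toReal = ‖x i‖ ^ p.toReal := by
    intro i
    rw [mazurMap_apply, Real.norm_eq_abs, abs_phi (by positivity) (x i), Real.norm_eq_abs,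
      ← Real.rpow_mul (abs_nonneg _), div_mul_cancel₀ _ (by positivity : q.toReal ≠ 0)]
  simp_rw [key]
  rw [← lp.norm_rpow_eq_tsum (by positivity) x, ← Real.rpow_mul (norm_nonneg x),
    mul_one_div]

lemma le_of_rpow_le_rpow {L R s : ℝ} (hR : 0 ≤ R) (hs : 0 < s) (h : L ^ s ≤ R ^ s)
    (hL : 0 ≤ L) : L ≤ R := by
  by_contra hc
  push_neg at hc
  exact absurd h (not_le.2 (Real.rpow_lt_rpow hR hc hs))

/-- Hölder-type estimate for the Mazur map when `p ≤ q`. -/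
lemma mazur_est_le [Fact (1 ≤ p)] [Fact (1 ≤ q)] (hp : 1 ≤ p) (hp' : p ≠ ⊤) (hq : 1 ≤ q) (hq' : q ≠ ⊤) (hpq : p ≤ q)
    (x y : lp (fun _ : ℕ => ℝ) p) :
    ‖mazurMap p q hp hp' hq hq' x - mazurMap p q hp hp' hq hq' y‖ ≤
      2 * ‖x - y‖ ^ (p.toReal / q.toReal) := by
  have hr : 1 ≤ p.toReal := toReal_one_le hp hp'
  have hs : 1 ≤ q.toReal := toReal_one_le hq hq'
  set r := p.toReal
  set s := q.toReal
  have hrs : r ≤ s := ENNReal.toReal_mono hq' hpq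
  set a := r / s with ha_def
  have ha : 0 < a := by positivity
  have ha1 : a ≤ 1 := by
    rw [ha_def, div_le_one (by positivity)]
    exact hrs
  set M := mazurMap p q hp hp' hq hq'
  have key : ‖M x - M y‖ ^ s ≤ 2 ^ s * ‖x - y‖ ^ r := by
    rw [lp.norm_rpow_eq_tsum (by positivity) (M x - M y)]
    have ptwise : ∀ i, ‖(M x - M y) i‖ ^ s ≤ 2 ^ s * ‖(x - y) i‖ ^ r := by
      intro i
      have h0 : (M x - M y) i = phi a (x i) - phi a (y i) := by
        simp [M, lp.coeFn_sub, mazurMap_apply]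
        rfl
      rw [h0, Real.norm_eq_abs]
      have h1 : |phi a (x i) - phi a (y i)| ≤ 2 * |x i - y i| ^ a :=
        phi_sub_le_of_le_one ha ha1 (x i) (y i)
      have h2 : |phi a (x i) - phi a (y i)| ^ s ≤ (2 * |x i - y i| ^ a) ^ s :=
        Real.rpow_le_rpow (abs_nonneg _) h1 (by positivity)
      refine h2.trans_eq ?_
      rw [Real.mul_rpow (by norm_num) (Real.rpow_nonneg (abs_nonneg _) _),
        ← Real.rpow_mul (abs_nonneg _), ha_def,
        div_mul_cancel₀ _ (by positivity : s ≠ 0)]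
      have h3 : (x - y) i = x i - y i := by simp [lp.coeFn_sub]
      rw [h3, Real.norm_eq_abs]
    have hsum1 : Summable fun i => ‖(M x - M y) i‖ ^ s :=
      (lp.memℓp (M x - M y)).summable (by positivity)
    have hsum2 : Summable fun i => 2 ^ s * ‖(x - y) i‖ ^ r :=
      ((lp.memℓp (x - y)).summable (by positivity)).mul_left _
    calc ∑' i, ‖(M x - M y) i‖ ^ s ≤ ∑' i, 2 ^ s * ‖(x - y) i‖ ^ r :=
          Summable.tsum_le_tsum ptwise hsum1 hsum2
    _ = 2 ^ s * ∑' i, ‖(x - y) i‖ ^ r := tsum_mul_left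
    _ = 2 ^ s * ‖x - y‖ ^ r := by rw [← lp.norm_rpow_eq_tsum (by positivity) (x - y)]
  refine le_of_rpow_le_rpow (by positivity) (by positivity : (0:ℝ) < s) ?_ (norm_nonneg _)
  refine key.trans_eq ?_
  rw [Real.mul_rpow (by norm_num) (Real.rpow_nonneg (norm_nonneg _) _),
    ← Real.rpow_mul (norm_nonneg _), ha_def, div_mul_cancel₀ _ (by positivity : s ≠ 0)]

lemma add_rpow_le_two_rpow_mul {c d m : ℝ} (hc : 0 ≤ c) (hd : 0 ≤ d) (hm : 0 ≤ m) :
    (c + d) ^ m ≤ 2 ^ m * (c ^ m + d ^ m) := by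
  have h1 : c + d ≤ 2 * max c d := by
    rcases le_total c d with h | h
    · rw [max_eq_right h]; linarith
    · rw [max_eq_left h]; linarith
  have h2 : (c + d) ^ m ≤ (2 * max c d) ^ m :=
    Real.rpow_le_rpow (by linarith) h1 hm
  refine h2.trans ?_
  rw [Real.mul_rpow (by norm_num) (le_max_iff.2 (Or.inl hc))]
  have h3 : max c d ^ m ≤ c ^ m + d ^ m := by
    rcases le_total c d with h | h
    · rw [max_eq_right h]
      have := Real.rpow_nonneg hc m
      linarith
    · rw [max_eq_left h]
      have := Real.rpow_nonneg hd m
      linarith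
  have h4 : (0:ℝ) ≤ 2 ^ m := Real.rpow_nonneg (by norm_num) m
  exact mul_le_mul_of_nonneg_left h3 h4

/-- Lipschitz estimate for the Mazur map on the unit ball when `q < p`. -/
lemma mazur_est_ge [Fact (1 ≤ p)] [Fact (1 ≤ q)] (hp : 1 ≤ p) (hp' : p ≠ ⊤) (hq : 1 ≤ q) (hq' : q ≠ ⊤) (hqp : q < p) :
    ∃ C : ℝ, 0 < C ∧ ∀ x y : lp (fun _ : ℕ => ℝ) p, ‖x‖ ≤ 1 → ‖y‖ ≤ 1 →
      ‖mazurMap p q hp hp' hq hq' x - mazurMap p q hp hp' hq hq' y‖ ≤ C * ‖x - y‖ := by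
  have hr : 1 ≤ p.toReal := toReal_one_le hp hp'
  have hs : 1 ≤ q.toReal := toReal_one_le hq hq'
  set r := p.toReal with hr_def
  set s := q.toReal with hs_def
  have hsr : s < r := by
    rw [hr_def, hs_def]
    exact (ENNReal.toReal_lt_toReal hq' hp').2 hqp
  set a := r / s with ha_def
  have ha1 : 1 ≤ a := by
    rw [ha_def, le_div_iff₀ (by positivity)]
    linarith
  have ha : 0 < a := by positivity
  set P := r / (r - s) with hP_def
  have hPQ : P.HolderConjugate a := by
    refine Real.holderConjugate_iff.mpr ⟨?_, ?_⟩
    · rw [hP_def, lt_div_iff₀ (by linarith : (0:ℝ) < r - s)]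
      linarith
    · rw [hP_def, ha_def]
      rw [inv_div, inv_div]
      rw [div_add_div _ _ (by positivity : r ≠ 0) (by positivity : r ≠ 0)]
      rw [div_eq_one_iff_eq (by positivity : r * r ≠ 0)]
      ring
  have hP0 : 0 < P := by
    rw [hP_def]
    exact div_pos (by linarith) (by linarith)
  set K := a ^ s * (2 ^ (s * P) * 2) ^ (1 / P) with hK_def
  have hK : 0 < K := by
    have h1 : (0:ℝ) < 2 ^ (s * P) := Real.rpow_pos_of_pos (by norm_num) _
    have h2 : (0:ℝ) < (2 ^ (s * P) * 2) ^ (1 / P) :=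
      Real.rpow_pos_of_pos (by positivity) _
    have h3 : (0:ℝ) < a ^ s := Real.rpow_pos_of_pos ha _
    positivity
  refine ⟨K ^ (1 / s), Real.rpow_pos_of_pos hK _, ?_⟩
  intro x y hx hy
  set M := mazurMap p q hp hp' hq hq'
  -- the functions entering Hölder's inequality
  set A : ℕ → ℝ := fun i => (|x i| ^ (a - 1) + |y i| ^ (a - 1)) ^ s with hA_def
  set B : ℕ → ℝ := fun i => |x i - y i| ^ s with hB_def
  have hA_nonneg : ∀ i, 0 ≤ A i := fun i => Real.rpow_nonneg
    (add_nonneg (Real.rpow_nonneg (abs_nonneg _) _) (Real.rpow_nonneg (abs_nonneg _) _)) _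
  have hB_nonneg : ∀ i, 0 ≤ B i := fun i => Real.rpow_nonneg (abs_nonneg _) _
  -- summability of `A ^ P`
  have hexp : (a - 1) * (s * P) = r := by
    rw [ha_def, hP_def]
    have h1 : s ≠ 0 := by linarith
    have h2 : r - s ≠ 0 := sub_ne_zero.2 (ne_of_gt hsr)
    field_simp
  have hAP_le : ∀ i, A i ^ P ≤ 2 ^ (s * P) * (‖x i‖ ^ r + ‖y i‖ ^ r) := by
    intro i
    have h1 : A i ^ P = (|x i| ^ (a - 1) + |y i| ^ (a - 1)) ^ (s * P) := by
      rw [hA_def, ← Real.rpow_mul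
        (add_nonneg (Real.rpow_nonneg (abs_nonneg _) _) (Real.rpow_nonneg (abs_nonneg _) _))]
    rw [h1]
    have h2 := add_rpow_le_two_rpow_mul (Real.rpow_nonneg (abs_nonneg (x i)) (a-1))
      (Real.rpow_nonneg (abs_nonneg (y i)) (a-1)) (by positivity : (0:ℝ) ≤ s * P)
    refine h2.trans_eq ?_
    rw [← Real.rpow_mul (abs_nonneg (x i)), ← Real.rpow_mul (abs_nonneg (y i)), hexp,
      Real.norm_eq_abs, Real.norm_eq_abs]
  have hxr : Summable fun i => ‖x i‖ ^ r := (lp.memℓp x).summable (by positivity)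
  have hyr : Summable fun i => ‖y i‖ ^ r := (lp.memℓp y).summable (by positivity)
  have hAP_sum : Summable fun i => A i ^ P := by
    refine Summable.of_nonneg_of_le (fun i => Real.rpow_nonneg (hA_nonneg i) _) hAP_le ?_
    exact ((hxr.add hyr).mul_left _)
  -- summability of `B ^ Q`
  have hBQ_eq : ∀ i, B i ^ a = ‖(x - y) i‖ ^ r := by
    intro i
    have h3 : (x - y) i = x i - y i := by simp [lp.coeFn_sub]
    rw [hB_def, ← Real.rpow_mul (abs_nonneg _), ha_def, h3, Real.norm_eq_abs]
    congr 1
    field_simp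
  have hBQ_sum : Summable fun i => B i ^ a := by
    simp_rw [hBQ_eq]
    exact (lp.memℓp (x - y)).summable (by positivity)
  -- Hölder
  obtain ⟨hAB_sum, hAB⟩ := Real.summable_and_inner_le_Lp_mul_Lq_tsum_of_nonneg hPQ hA_nonneg hB_nonneg
    hAP_sum hBQ_sum
  -- pointwise estimate
  have ptwise : ∀ i, ‖(M x - M y) i‖ ^ s ≤ a ^ s * (A i * B i) := by
    intro i
    have h0 : (M x - M y) i = phi a (x i) - phi a (y i) := by
      simp [M, lp.coeFn_sub, mazurMap_apply]
      rfl
    rw [h0, Real.norm_eq_abs]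
    have h1 := phi_sub_le_of_one_le ha1 (x i) (y i)
    have h2 : |phi a (x i) - phi a (y i)| ^ s
        ≤ (a * (|x i| ^ (a-1) + |y i| ^ (a-1)) * |x i - y i|) ^ s :=
      Real.rpow_le_rpow (abs_nonneg _) h1 (by positivity)
    refine h2.trans_eq ?_
    rw [Real.mul_rpow (mul_nonneg ha.le (add_nonneg (Real.rpow_nonneg (abs_nonneg _) _)
        (Real.rpow_nonneg (abs_nonneg _) _))) (abs_nonneg _),
      Real.mul_rpow ha.le (add_nonneg (Real.rpow_nonneg (abs_nonneg _) _)
        (Real.rpow_nonneg (abs_nonneg _) _))]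
    rw [hA_def, hB_def]
    ring
  -- main estimate
  have key : ‖M x - M y‖ ^ s ≤ K * ‖x - y‖ ^ s := by
    rw [lp.norm_rpow_eq_tsum (by positivity) (M x - M y)]
    have hsum1 : Summable fun i => ‖(M x - M y) i‖ ^ s :=
      (lp.memℓp (M x - M y)).summable (by positivity)
    have step1 : ∑' i, ‖(M x - M y) i‖ ^ s ≤ a ^ s * ∑' i, A i * B i := by
      rw [← tsum_mul_left]
      exact Summable.tsum_le_tsum ptwise hsum1 (hAB_sum.mul_left _)
    have step2 : (∑' i, A i ^ P) ^ (1 / P) ≤ (2 ^ (s * P) * 2) ^ (1 / P) := by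
      refine Real.rpow_le_rpow (tsum_nonneg fun i => Real.rpow_nonneg (hA_nonneg i) _) ?_
        (by positivity)
      have hsplit : ∑' i, A i ^ P ≤ 2 ^ (s * P) * (∑' i, ‖x i‖ ^ r + ∑' i, ‖y i‖ ^ r) := by
        calc ∑' i, A i ^ P ≤ ∑' i, 2 ^ (s * P) * (‖x i‖ ^ r + ‖y i‖ ^ r) :=
              Summable.tsum_le_tsum hAP_le hAP_sum ((hxr.add hyr).mul_left _)
        _ = 2 ^ (s * P) * (∑' i, ‖x i‖ ^ r + ∑' i, ‖y i‖ ^ r) := by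
            rw [tsum_mul_left, Summable.tsum_add hxr hyr]
      refine hsplit.trans ?_
      have hx1 : ∑' i, ‖x i‖ ^ r ≤ 1 := by
        rw [← lp.norm_rpow_eq_tsum (by positivity) x]
        exact Real.rpow_le_one (norm_nonneg _) hx (by positivity)
      have hy1 : ∑' i, ‖y i‖ ^ r ≤ 1 := by
        rw [← lp.norm_rpow_eq_tsum (by positivity) y]
        exact Real.rpow_le_one (norm_nonneg _) hy (by positivity)
      have h20 : (0:ℝ) ≤ 2 ^ (s * P) := Real.rpow_nonneg (by norm_num) _
      nlinarith
    have step3 : (∑' i, B i ^ a) ^ (1 / a) = ‖x - y‖ ^ s := by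
      simp_rw [hBQ_eq]
      rw [← lp.norm_rpow_eq_tsum (by positivity) (x - y), ← Real.rpow_mul (norm_nonneg _),
        ha_def]
      congr 1
      field_simp
      rfl
    calc ∑' i, ‖(M x - M y) i‖ ^ s ≤ a ^ s * ∑' i, A i * B i := step1
    _ ≤ a ^ s * ((∑' i, A i ^ P) ^ (1 / P) * (∑' i, B i ^ a) ^ (1 / a)) := by
        refine mul_le_mul_of_nonneg_left hAB (Real.rpow_nonneg ha.le _)
    _ ≤ a ^ s * ((2 ^ (s * P) * 2) ^ (1 / P) * ‖x - y‖ ^ s) := by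
        rw [step3]
        refine mul_le_mul_of_nonneg_left (mul_le_mul_of_nonneg_right step2
          (Real.rpow_nonneg (norm_nonneg _) _)) (Real.rpow_nonneg ha.le _)
    _ = K * ‖x - y‖ ^ s := by rw [hK_def]; ring
  refine le_of_rpow_le_rpow (by positivity) (by positivity : (0:ℝ) < s) ?_ (norm_nonneg _)
  have hfin : (K ^ (1 / s) * ‖x - y‖) ^ s = K * ‖x - y‖ ^ s := by
    rw [Real.mul_rpow (Real.rpow_nonneg hK.le _) (norm_nonneg _), ← Real.rpow_mul hK.le,
      one_div_mul_cancel (by positivity : s ≠ 0), Real.rpow_one]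
  exact key.trans_eq hfin.symm

end MazurAux

namespace MazurAux

lemma uniformContinuous_of_bound {X Y : Type*} [PseudoMetricSpace X] [PseudoMetricSpace Y]
    (f : X → Y) (C θ : ℝ) (hC : 0 < C) (hθ : 0 < θ)
    (h : ∀ x y, dist (f x) (f y) ≤ C * dist x y ^ θ) : UniformContinuous f := by
  rw [Metric.uniformContinuous_iff]
  intro ε hε
  refine ⟨(ε / (2 * C)) ^ (1 / θ), Real.rpow_pos_of_pos (by positivity) _, fun {x y} hxy => ?_⟩
  have h1 : dist x y ^ θ ≤ ((ε / (2 * C)) ^ (1 / θ)) ^ θ :=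
    Real.rpow_le_rpow dist_nonneg hxy.le hθ.le
  have h2 : ((ε / (2 * C)) ^ (1 / θ)) ^ θ = ε / (2 * C) := by
    rw [← Real.rpow_mul (by positivity), one_div_mul_cancel hθ.ne', Real.rpow_one]
  calc dist (f x) (f y) ≤ C * dist x y ^ θ := h x y
  _ ≤ C * (ε / (2 * C)) := by
      rw [← h2]
      exact mul_le_mul_of_nonneg_left h1 hC.le
  _ = ε / 2 := by field_simp
  _ < ε := by linarith

/-- The main construction for `p < q`. -/
lemma main_lt (p q : ℝ≥0∞) (hp : 1 ≤ p) (hp' : p ≠ ⊤) (hq : 1 ≤ q) (hq' : q ≠ ⊤)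
    [Fact (1 ≤ p)] [Fact (1 ≤ q)] (hpq : p < q) :
    ∃ (F : Metric.closedBall (0 : lp (fun _ : ℕ => ℝ) p) 1 →
          Metric.closedBall (0 : lp (fun _ : ℕ => ℝ) q) 1)
      (G : Metric.closedBall (0 : lp (fun _ : ℕ => ℝ) q) 1 →
          Metric.closedBall (0 : lp (fun _ : ℕ => ℝ) p) 1),
      Function.LeftInverse G F ∧ Function.RightInverse G F ∧
      UniformContinuous F ∧ UniformContinuous G := by
  have hr : 1 ≤ p.toReal := toReal_one_le hp hp'
  have hs : 1 ≤ q.toReal := toReal_one_le hq hq'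
  have hball : ∀ (z : lp (fun _ : ℕ => ℝ) p), z ∈ Metric.closedBall 0 1 → ‖z‖ ≤ 1 := by
    intro z hz
    rwa [Metric.mem_closedBall, dist_zero_right] at hz
  have hball' : ∀ (z : lp (fun _ : ℕ => ℝ) q), z ∈ Metric.closedBall 0 1 → ‖z‖ ≤ 1 := by
    intro z hz
    rwa [Metric.mem_closedBall, dist_zero_right] at hz
  refine ⟨fun z => ⟨mazurMap p q hp hp' hq hq' z.1, ?_⟩,
    fun z => ⟨mazurMap q p hq hq' hp hp' z.1, ?_⟩, ?_, ?_, ?_, ?_⟩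
  · rw [Metric.mem_closedBall, dist_zero_right, norm_mazurMap hp hp' hq hq']
    exact Real.rpow_le_one (norm_nonneg _) (hball z.1 z.2) (by positivity)
  · rw [Metric.mem_closedBall, dist_zero_right, norm_mazurMap hq hq' hp hp']
    exact Real.rpow_le_one (norm_nonneg _) (hball' z.1 z.2) (by positivity)
  · intro z
    exact Subtype.ext (mazurMap_mazurMap hp hp' hq hq' z.1)
  · intro z
    exact Subtype.ext (mazurMap_mazurMap hq hq' hp hp' z.1)
  · refine uniformContinuous_of_bound _ 2 (p.toReal / q.toReal) (by norm_num)
      (by positivity) fun x y => ?_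
    simp only [Subtype.dist_eq, dist_eq_norm]
    exact mazur_est_le hp hp' hq hq' hpq.le x.1 y.1
  · obtain ⟨C, hC, hest⟩ := mazur_est_ge hq hq' hp hp' hpq
    refine uniformContinuous_of_bound _ C 1 hC one_pos fun x y => ?_
    simp only [Subtype.dist_eq, dist_eq_norm, Real.rpow_one]
    exact hest x.1 y.1 (hball' x.1 x.2) (hball' y.1 y.2)

end MazurAux

open MazurAux

/-- For all `1 ≤ p, q < ∞` the closed unit balls of `ℓ_p` and `ℓ_q` are
uniformly homeomorphic. -/
theorem lp_balls_uniformly_homeomorphic (p q : ℝ≥0∞)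
    (hp : 1 ≤ p) (hp' : p ≠ ⊤) (hq : 1 ≤ q) (hq' : q ≠ ⊤)
    [Fact (1 ≤ p)] [Fact (1 ≤ q)] :
    ∃ (F : Metric.closedBall (0 : lp (fun _ : ℕ => ℝ) p) 1 →
          Metric.closedBall (0 : lp (fun _ : ℕ => ℝ) q) 1)
      (G : Metric.closedBall (0 : lp (fun _ : ℕ => ℝ) q) 1 →
          Metric.closedBall (0 : lp (fun _ : ℕ => ℝ) p) 1),
      Function.LeftInverse G F ∧ Function.RightInverse G F ∧
      UniformContinuous F ∧ UniformContinuous G := by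
  rcases lt_trichotomy p q with h | rfl | h
  · exact main_lt p q hp hp' hq hq' h
  · exact ⟨id, id, fun _ => rfl, fun _ => rfl, uniformContinuous_id, uniformContinuous_id⟩
  · obtain ⟨F, G, h1, h2, h3, h4⟩ := main_lt q p hq hq' hp hp' h
    exact ⟨G, F, h2, h1, h4, h3⟩

end
end

section
/- Let 1 < p < ∞ and 1 ≤ s < ∞, and define G : S(ℓ_{ps}) → S(ℓ_s) coordinatewise by G(x)_i = sign(x_i)·|x_i|^p. Then G maps S(ℓ_{ps}) into S(ℓ_s), and for all x, y ∈ S(ℓ_{ps}) with δ = ‖x − y‖_{ps} one has 2^{1−p}·δ^p ≤ ‖G(x) − G(y)‖_s; moreover, if δ ≤ 1 then also ‖G(x) − G(y)‖_s ≤ δ^p + δ^{p/2} + 2(1 − (1 − √δ)^p). -/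
open scoped ENNReal

noncomputable section

namespace PconvAux

lemma rpow_superadd {p a b : ℝ} (hp : 1 ≤ p) (ha : 0 ≤ a) (hb : 0 ≤ b) :
    a ^ p + b ^ p ≤ (a + b) ^ p := by
  have h := NNReal.add_rpow_le_rpow_add a.toNNReal b.toNNReal hp
  rw [← Real.coe_toNNReal a ha, ← Real.coe_toNNReal b hb]
  exact_mod_cast h

lemma rpow_convex2 {p a b : ℝ} (hp : 1 ≤ p) (ha : 0 ≤ a) (hb : 0 ≤ b) :
    (2:ℝ) ^ (1 - p) * (a + b) ^ p ≤ a ^ p + b ^ p := by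
  have h := NNReal.rpow_add_le_mul_rpow_add_rpow a.toNNReal b.toNNReal hp
  have h' : (a + b) ^ p ≤ (2:ℝ) ^ (p - 1) * (a ^ p + b ^ p) := by
    rw [← Real.coe_toNNReal a ha, ← Real.coe_toNNReal b hb]
    exact_mod_cast h
  have h2 : (0:ℝ) < 2 ^ (p - 1) := Real.rpow_pos_of_pos two_pos _
  rw [show (1 - p) = -(p - 1) by ring, Real.rpow_neg (by norm_num), inv_mul_le_iff₀ h2]
  exact h'

lemma rpow_eq_one_imp {a s : ℝ} (ha : 0 ≤ a) (hs : 0 < s) (h : a ^ s = 1) : a = 1 := by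
  have h1 : a ^ s = (1:ℝ) ^ s := by rw [h, Real.one_rpow]
  exact le_antisymm ((Real.rpow_le_rpow_iff ha zero_le_one hs).mp h1.le)
    ((Real.rpow_le_rpow_iff zero_le_one ha hs).mp h1.ge)

variable {p : ℝ}

lemma F_nonneg (hp0 : p ≠ 0) {a : ℝ} (ha : 0 ≤ a) : Real.sign a * |a| ^ p = a ^ p := by
  rcases ha.eq_or_lt with h | h
  · rw [← h]; simp [Real.sign_zero, Real.zero_rpow hp0]
  · rw [Real.sign_of_pos h, abs_of_pos h, one_mul]

lemma F_nonpos (hp0 : p ≠ 0) {a : ℝ} (ha : a ≤ 0) : Real.sign a * |a| ^ p = -((-a) ^ p) := by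
  rcases ha.eq_or_lt with h | h
  · rw [h]; simp [Real.sign_zero, Real.zero_rpow hp0]
  · rw [Real.sign_of_neg h, abs_of_neg h]; ring

lemma abs_F (hp0 : p ≠ 0) (a : ℝ) : |Real.sign a * |a| ^ p| = |a| ^ p := by
  rcases lt_trichotomy a 0 with h | h | h
  · rw [Real.sign_of_neg h, abs_mul, abs_neg, abs_one, one_mul,
      abs_of_nonneg (Real.rpow_nonneg (abs_nonneg a) p)]
  · rw [h]; simp [Real.sign_zero, Real.zero_rpow hp0]
  · rw [Real.sign_of_pos h, one_mul, abs_of_nonneg (Real.rpow_nonneg (abs_nonneg a) p)]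

lemma low_main (hp : 1 < p) {a b : ℝ} (hba : b ≤ a) :
    (2:ℝ) ^ (1 - p) * (a - b) ^ p ≤
      Real.sign a * |a| ^ p - Real.sign b * |b| ^ p := by
  have hp0 : p ≠ 0 := by positivity
  have hp1 : 1 ≤ p := hp.le
  have h21 : (2:ℝ) ^ (1 - p) ≤ 1 :=
    Real.rpow_le_one_of_one_le_of_nonpos one_le_two (by linarith)
  rcases le_total 0 b with hb | hb
  · have ha : 0 ≤ a := hb.trans hba
    rw [F_nonneg hp0 ha, F_nonneg hp0 hb]
    have key : (a - b) ^ p + b ^ p ≤ a ^ p := by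
      have := rpow_superadd hp1 (sub_nonneg.2 hba) hb
      rwa [sub_add_cancel] at this
    have h1 : (2:ℝ) ^ (1 - p) * (a - b) ^ p ≤ (a - b) ^ p :=
      mul_le_of_le_one_left (Real.rpow_nonneg (by linarith) p) h21
    linarith
  · rcases le_total 0 a with ha | ha
    · rw [F_nonneg hp0 ha, F_nonpos hp0 hb]
      have h2 := rpow_convex2 hp1 ha (neg_nonneg.2 hb)
      calc (2:ℝ) ^ (1 - p) * (a - b) ^ p = 2 ^ (1 - p) * (a + -b) ^ p := by ring_nf
        _ ≤ a ^ p + (-b) ^ p := h2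
        _ = a ^ p - -((-b) ^ p) := by ring
    · rw [F_nonpos hp0 ha, F_nonpos hp0 hb]
      have key : (a - b) ^ p + (-a) ^ p ≤ (-b) ^ p := by
        have := rpow_superadd hp1 (sub_nonneg.2 hba) (neg_nonneg.2 ha)
        rwa [show a - b + -a = -b by ring] at this
      have h1 : (2:ℝ) ^ (1 - p) * (a - b) ^ p ≤ (a - b) ^ p :=
        mul_le_of_le_one_left (Real.rpow_nonneg (by linarith) p) h21
      linarith

lemma low_pointwise (hp : 1 < p) (a b : ℝ) :
    (2:ℝ) ^ (1 - p) * |a - b| ^ p ≤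
      |Real.sign a * |a| ^ p - Real.sign b * |b| ^ p| := by
  rcases le_total b a with h | h
  · rw [abs_of_nonneg (sub_nonneg.2 h)]
    exact (low_main hp h).trans (le_abs_self _)
  · rw [abs_sub_comm a b, abs_sub_comm (Real.sign a * |a| ^ p) _,
      abs_of_nonneg (sub_nonneg.2 h)]
    exact (low_main hp h).trans (le_abs_self _)

lemma upper_C (hp : 1 ≤ p) {a b : ℝ} (h : a * b ≤ 0) :
    |Real.sign a * |a| ^ p - Real.sign b * |b| ^ p| ≤ |a - b| ^ p := by
  have hp0 : p ≠ 0 := by positivity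
  rcases mul_nonpos_iff.1 h with ⟨ha, hb⟩ | ⟨ha, hb⟩
  case inl =>
    rw [F_nonneg hp0 ha, F_nonpos hp0 hb, sub_neg_eq_add]
    have hnn : (0:ℝ) ≤ a ^ p + (-b) ^ p :=
      add_nonneg (Real.rpow_nonneg ha p) (Real.rpow_nonneg (neg_nonneg.2 hb) p)
    rw [abs_of_nonneg hnn, abs_of_nonneg (show (0:ℝ) ≤ a - b by linarith)]
    calc a ^ p + (-b) ^ p ≤ (a + -b) ^ p := rpow_superadd hp ha (neg_nonneg.2 hb)
      _ = (a - b) ^ p := by ring_nf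
  case inr =>
    rw [F_nonpos hp0 ha, F_nonneg hp0 hb]
    have h2 : -((-a) ^ p) - b ^ p ≤ 0 := by
      have := Real.rpow_nonneg (neg_nonneg.2 ha) p
      have := Real.rpow_nonneg hb p
      linarith
    rw [abs_of_nonpos h2, abs_sub_comm a b,
      abs_of_nonneg (show (0:ℝ) ≤ b - a by linarith)]
    calc -(-((-a) ^ p) - b ^ p) = b ^ p + (-a) ^ p := by ring
      _ ≤ (b + -a) ^ p := rpow_superadd hp hb (neg_nonneg.2 ha)
      _ = (b - a) ^ p := by ring_nf

lemma same_sign_diff (hp0 : p ≠ 0) {a b : ℝ} (h : 0 < a * b) :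
    |Real.sign a * |a| ^ p - Real.sign b * |b| ^ p| = abs (|a| ^ p - |b| ^ p) := by
  rcases mul_pos_iff.1 h with ⟨ha, hb⟩ | ⟨ha, hb⟩
  · rw [F_nonneg hp0 ha.le, F_nonneg hp0 hb.le, abs_of_pos ha, abs_of_pos hb]
  · rw [F_nonpos hp0 ha.le, F_nonpos hp0 hb.le, abs_of_neg ha, abs_of_neg hb,
      show -((-a) ^ p) - -((-b) ^ p) = -((-a) ^ p - (-b) ^ p) by ring, abs_neg]

lemma ss_abs_sub {a b : ℝ} (h : 0 < a * b) : |a - b| = abs (|a| - |b|) := by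
  rcases mul_pos_iff.1 h with ⟨ha, hb⟩ | ⟨ha, hb⟩
  · rw [abs_of_pos ha, abs_of_pos hb]
  · rw [abs_of_neg ha, abs_of_neg hb, show -a - -b = -(a - b) by ring, abs_neg]

lemma upper_D (hp : 1 ≤ p) {a b : ℝ} (h : 0 < a * b) :
    |Real.sign a * |a| ^ p - Real.sign b * |b| ^ p| ≤ max |a| |b| ^ p := by
  have hp0 : p ≠ 0 := by positivity
  rw [same_sign_diff hp0 h]
  have h1 : |a| ^ p ≤ max |a| |b| ^ p :=
    Real.rpow_le_rpow (abs_nonneg a) (le_max_left _ _) (by linarith)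
  have h2 : |b| ^ p ≤ max |a| |b| ^ p :=
    Real.rpow_le_rpow (abs_nonneg b) (le_max_right _ _) (by linarith)
  have h3 : (0:ℝ) ≤ |a| ^ p := Real.rpow_nonneg (abs_nonneg a) p
  have h4 : (0:ℝ) ≤ |b| ^ p := Real.rpow_nonneg (abs_nonneg b) p
  rw [abs_sub_le_iff]
  constructor <;> linarith

lemma upper_E_main (hp : 1 ≤ p) {σ a b : ℝ} (h : 0 < a * b) (hσ0 : 0 ≤ σ) (hσ1 : σ ≤ 1)
    (hba : |b| ≤ |a|) (hd : |a - b| ≤ σ * max |a| |b|) :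
    |Real.sign a * |a| ^ p - Real.sign b * |b| ^ p| ≤
      (1 - (1 - σ) ^ p) * (|a| ^ p + |b| ^ p) := by
  have hp0 : p ≠ 0 := by positivity
  rw [same_sign_diff hp0 h]
  rw [ss_abs_sub h, max_eq_left hba, abs_of_nonneg (sub_nonneg.2 hba)] at hd
  have hb_low : (1 - σ) * |a| ≤ |b| := by nlinarith [abs_nonneg a]
  have hbp : (1 - σ) ^ p * |a| ^ p ≤ |b| ^ p := by
    have := Real.rpow_le_rpow (mul_nonneg (by linarith) (abs_nonneg a)) hb_low (by linarith : (0:ℝ) ≤ p)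
    rwa [Real.mul_rpow (by linarith) (abs_nonneg a)] at this
  have habp : |b| ^ p ≤ |a| ^ p := Real.rpow_le_rpow (abs_nonneg b) hba (by linarith)
  have ht1 : (1 - σ) ^ p ≤ 1 := Real.rpow_le_one (by linarith) (by linarith) (by linarith)
  have hB : (0:ℝ) ≤ |b| ^ p := Real.rpow_nonneg (abs_nonneg b) p
  have htB : (1 - σ) ^ p * |b| ^ p ≤ |b| ^ p := by nlinarith
  rw [abs_of_nonneg (sub_nonneg.2 habp)]
  nlinarith

lemma upper_E (hp : 1 ≤ p) {σ a b : ℝ} (h : 0 < a * b) (hσ0 : 0 ≤ σ) (hσ1 : σ ≤ 1)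
    (hd : |a - b| ≤ σ * max |a| |b|) :
    |Real.sign a * |a| ^ p - Real.sign b * |b| ^ p| ≤
      (1 - (1 - σ) ^ p) * (|a| ^ p + |b| ^ p) := by
  rcases le_total |b| |a| with hba | hba
  · exact upper_E_main hp h hσ0 hσ1 hba hd
  · have h' : 0 < b * a := by rwa [mul_comm] at h
    have hd' : |b - a| ≤ σ * max |b| |a| := by rwa [abs_sub_comm, max_comm]
    have := upper_E_main hp h' hσ0 hσ1 hba hd'
    rwa [abs_sub_comm, add_comm (|b| ^ p)] at this

end PconvAux

namespace PconvAux

lemma memℓp_of_abs_le {r : ℝ≥0∞} (hr : 0 < r.toReal) {f : ℕ → ℝ}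
    (G : lp (fun _ : ℕ => ℝ) r) (h : ∀ i, |f i| ≤ |G i|) : Memℓp f r := by
  have hG : Summable fun i => ‖G i‖ ^ r.toReal := (memℓp_gen_iff hr).1 (lp.memℓp G)
  have hb : ∀ i, ‖f i‖ ^ r.toReal ≤ ‖G i‖ ^ r.toReal := fun i =>
    Real.rpow_le_rpow (norm_nonneg _) (by simpa [Real.norm_eq_abs] using h i) hr.le
  apply memℓp_gen
  exact Summable.of_nonneg_of_le (fun i => Real.rpow_nonneg (norm_nonneg _) _) hb hG

lemma lp_norm_le_of_abs_le {r : ℝ≥0∞} [Fact (1 ≤ r)] (hr : 0 < r.toReal)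
    {f G : lp (fun _ : ℕ => ℝ) r}
    (h : ∀ i, |f i| ≤ |G i|) : ‖f‖ ≤ ‖G‖ := by
  have hGs : Summable fun i => ‖G i‖ ^ r.toReal := (memℓp_gen_iff hr).1 (lp.memℓp G)
  have hfs : Summable fun i => ‖f i‖ ^ r.toReal := (memℓp_gen_iff hr).1 (lp.memℓp f)
  have hb : ∀ i, ‖f i‖ ^ r.toReal ≤ ‖G i‖ ^ r.toReal := fun i =>
    Real.rpow_le_rpow (norm_nonneg _) (by simpa [Real.norm_eq_abs] using h i) hr.le
  apply (Real.rpow_le_rpow_iff (norm_nonneg f) (norm_nonneg G) hr).1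
  rw [lp.norm_rpow_eq_tsum hr, lp.norm_rpow_eq_tsum hr]
  exact Summable.tsum_le_tsum hb hfs hGs

end PconvAux

open PconvAux

/-- The map `G(x)_i = sign(x_i)·|x_i|^p` sends `S(ℓ_{ps})` into `S(ℓ_s)` and satisfies
`2^{1-p}·δ^p ≤ ‖G x - G y‖_s`, and, for `δ ≤ 1`,
`‖G x - G y‖_s ≤ δ^p + δ^{p/2} + 2(1 - (1 - √δ)^p)`, where `δ = ‖x - y‖_{ps}`. -/
theorem p_convexification_map_estimates (p s : ℝ) (hp : 1 < p) (hs : 1 ≤ s)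
    [Fact (1 ≤ ENNReal.ofReal (p * s))] [Fact (1 ≤ ENNReal.ofReal s)]
    (x y : lp (fun _ : ℕ => ℝ) (ENNReal.ofReal (p * s)))
    (hx : ‖x‖ = 1) (hy : ‖y‖ = 1) :
    ∃ Gx Gy : lp (fun _ : ℕ => ℝ) (ENNReal.ofReal s),
      (∀ i, Gx i = Real.sign (x i) * |x i| ^ p) ∧
      (∀ i, Gy i = Real.sign (y i) * |y i| ^ p) ∧
      ‖Gx‖ = 1 ∧ ‖Gy‖ = 1 ∧
      (2 : ℝ) ^ (1 - p) * ‖x - y‖ ^ p ≤ ‖Gx - Gy‖ ∧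
      (‖x - y‖ ≤ 1 →
        ‖Gx - Gy‖ ≤ ‖x - y‖ ^ p + ‖x - y‖ ^ (p / 2) +
          2 * (1 - (1 - Real.sqrt ‖x - y‖) ^ p)) := by
  classical
  have hs0 : (0:ℝ) < s := lt_of_lt_of_le one_pos hs
  have hp0 : (0:ℝ) < p := lt_trans one_pos hp
  have hp1 : (1:ℝ) ≤ p := hp.le
  have hpne : p ≠ 0 := ne_of_gt hp0
  have hps0 : (0:ℝ) < p * s := mul_pos hp0 hs0
  have hrt : (ENNReal.ofReal s).toReal = s := ENNReal.toReal_ofReal hs0.le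
  have hqt : (ENNReal.ofReal (p * s)).toReal = p * s := ENNReal.toReal_ofReal hps0.le
  have hrpos : 0 < (ENNReal.ofReal s).toReal := by rw [hrt]; exact hs0
  have hqpos : 0 < (ENNReal.ofReal (p * s)).toReal := by rw [hqt]; exact hps0
  set g : ℕ → ℝ := fun i => Real.sign (x i) * |x i| ^ p with hgdef
  set h : ℕ → ℝ := fun i => Real.sign (y i) * |y i| ^ p with hhdef
  -- norm of coordinates of the image
  have key_norm : ∀ (z : lp (fun _ : ℕ => ℝ) (ENNReal.ofReal (p * s))) (i : ℕ),
      ‖Real.sign (z i) * |z i| ^ p‖ ^ s = ‖z i‖ ^ (p * s) := by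
    intro z i
    rw [Real.norm_eq_abs, abs_F hpne, Real.norm_eq_abs, Real.rpow_mul (abs_nonneg _)]
  have base_sum : ∀ z : lp (fun _ : ℕ => ℝ) (ENNReal.ofReal (p * s)),
      Summable fun i => ‖z i‖ ^ (p * s) := by
    intro z
    have := (memℓp_gen_iff hqpos).1 (lp.memℓp z)
    rwa [hqt] at this
  have gmem : Memℓp g (ENNReal.ofReal s) := by
    apply memℓp_gen
    rw [hrt]
    exact (summable_congr fun i => key_norm x i).2 (base_sum x)
  have hmem : Memℓp h (ENNReal.ofReal s) := by
    apply memℓp_gen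
    rw [hrt]
    exact (summable_congr fun i => key_norm y i).2 (base_sum y)
  set Gx : lp (fun _ : ℕ => ℝ) (ENNReal.ofReal s) := ⟨g, gmem⟩ with hGxdef
  set Gy : lp (fun _ : ℕ => ℝ) (ENNReal.ofReal s) := ⟨h, hmem⟩ with hGydef
  have hGxapp : ∀ i, Gx i = g i := fun i => rfl
  have hGyapp : ∀ i, Gy i = h i := fun i => rfl
  -- norms equal one
  have norm_G : ∀ (z : lp (fun _ : ℕ => ℝ) (ENNReal.ofReal (p * s)))
      (G : lp (fun _ : ℕ => ℝ) (ENNReal.ofReal s)),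
      (∀ i, G i = Real.sign (z i) * |z i| ^ p) → ‖z‖ = 1 → ‖G‖ = 1 := by
    intro z G hGapp hz
    apply rpow_eq_one_imp (norm_nonneg _) hs0
    have h1 := lp.norm_rpow_eq_tsum hrpos G
    rw [hrt] at h1
    have h2 := lp.norm_rpow_eq_tsum hqpos z
    rw [hqt] at h2
    rw [h1]
    calc ∑' i, ‖G i‖ ^ s = ∑' i, ‖z i‖ ^ (p * s) := by
          refine tsum_congr fun i => ?_
          rw [hGapp i]
          exact key_norm z i
      _ = ‖z‖ ^ (p * s) := h2.symm
      _ = 1 := by rw [hz, Real.one_rpow]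
  have hGxnorm : ‖Gx‖ = 1 := norm_G x Gx hGxapp hx
  have hGynorm : ‖Gy‖ = 1 := norm_G y Gy hGyapp hy
  -- coordinates of differences
  have happ : ∀ i, (Gx - Gy) i = g i - h i := by
    intro i; rw [lp.coeFn_sub]; rfl
  have hxyapp : ∀ i, (x - y) i = x i - y i := by
    intro i; rw [lp.coeFn_sub]; rfl
  have hnormxy := lp.norm_rpow_eq_tsum hqpos (x - y)
  rw [hqt] at hnormxy
  have hnormG := lp.norm_rpow_eq_tsum hrpos (Gx - Gy)
  rw [hrt] at hnormG
  have sumG : Summable fun i => ‖(Gx - Gy) i‖ ^ s := by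
    have := (memℓp_gen_iff hrpos).1 (lp.memℓp (Gx - Gy))
    rwa [hrt] at this
  -- LOWER BOUND
  have hlow : (2 : ℝ) ^ (1 - p) * ‖x - y‖ ^ p ≤ ‖Gx - Gy‖ := by
    have hpt : ∀ i, ((2:ℝ) ^ (1 - p) * ‖(x - y) i‖ ^ p) ^ s ≤ ‖(Gx - Gy) i‖ ^ s := by
      intro i
      apply Real.rpow_le_rpow (by positivity) _ hs0.le
      rw [hxyapp i, happ i, Real.norm_eq_abs, Real.norm_eq_abs]
      exact low_pointwise hp (x i) (y i)
    have hrw : ∀ (t : ℝ), 0 ≤ t → ((2:ℝ) ^ (1 - p) * t ^ p) ^ s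
        = (2:ℝ) ^ ((1 - p) * s) * t ^ (p * s) := by
      intro t ht
      rw [Real.mul_rpow (by positivity) (by positivity),
        ← Real.rpow_mul (by norm_num : (0:ℝ) ≤ 2), ← Real.rpow_mul ht]
    have hsumL : Summable fun i => ((2:ℝ) ^ (1 - p) * ‖(x - y) i‖ ^ p) ^ s :=
      (summable_congr fun i => hrw _ (norm_nonneg _)).2 ((base_sum (x - y)).mul_left _)
    have hmain : ((2:ℝ) ^ (1 - p) * ‖x - y‖ ^ p) ^ s ≤ ‖Gx - Gy‖ ^ s := by
      calc ((2:ℝ) ^ (1 - p) * ‖x - y‖ ^ p) ^ s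
          = (2:ℝ) ^ ((1 - p) * s) * ‖x - y‖ ^ (p * s) := hrw _ (norm_nonneg _)
        _ = (2:ℝ) ^ ((1 - p) * s) * ∑' i, ‖(x - y) i‖ ^ (p * s) := by rw [hnormxy]
        _ = ∑' i, (2:ℝ) ^ ((1 - p) * s) * ‖(x - y) i‖ ^ (p * s) := tsum_mul_left.symm
        _ = ∑' i, ((2:ℝ) ^ (1 - p) * ‖(x - y) i‖ ^ p) ^ s :=
            tsum_congr fun i => (hrw _ (norm_nonneg _)).symm
        _ ≤ ∑' i, ‖(Gx - Gy) i‖ ^ s := Summable.tsum_le_tsum hpt hsumL sumG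
        _ = ‖Gx - Gy‖ ^ s := hnormG.symm
    exact (Real.rpow_le_rpow_iff (by positivity) (norm_nonneg _) hs0).1 hmain
  -- UPPER BOUND
  have hupp : ‖x - y‖ ≤ 1 →
      ‖Gx - Gy‖ ≤ ‖x - y‖ ^ p + ‖x - y‖ ^ (p / 2) +
        2 * (1 - (1 - Real.sqrt ‖x - y‖) ^ p) := by
    intro hδ1
    by_cases hδz : ‖x - y‖ = 0
    · have hxy : x = y := sub_eq_zero.1 (norm_eq_zero.1 hδz)
      have hGG : Gx = Gy := by
        apply lp.ext
        funext i
        show g i = h i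
        simp only [hgdef, hhdef, hxy]
      rw [hGG, sub_self, norm_zero, hδz, Real.zero_rpow hpne,
        Real.zero_rpow (show p / 2 ≠ 0 by positivity), Real.sqrt_zero, sub_zero,
        Real.one_rpow]
      norm_num
    · have hδpos : 0 < ‖x - y‖ := lt_of_le_of_ne (norm_nonneg _) (Ne.symm hδz)
      set σ : ℝ := Real.sqrt ‖x - y‖ with hσdef
      have hσpos : 0 < σ := Real.sqrt_pos.2 hδpos
      have hσ1 : σ ≤ 1 := by
        rw [hσdef]
        exact (Real.sqrt_le_sqrt hδ1).trans (le_of_eq Real.sqrt_one)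
      have hσsq : σ * σ = ‖x - y‖ := Real.mul_self_sqrt (norm_nonneg _)
      set c : ℝ := 1 - (1 - σ) ^ p with hcdef
      have hc0 : 0 ≤ c := by
        rw [hcdef]
        have := Real.rpow_le_one (by linarith : (0:ℝ) ≤ 1 - σ) (by linarith) hp0.le
        linarith
      -- membership of truncated pieces
      have mk : ∀ u : ℕ → ℝ, (∀ i, |u i| ≤ |g i - h i|) → Memℓp u (ENNReal.ofReal s) := by
        intro u hu
        apply memℓp_of_abs_le hrpos (Gx - Gy)
        intro i
        rw [happ i]
        exact hu i
      have memC : (fun i => if x i * y i ≤ 0 then g i - h i else 0) ∈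
          lp (fun _ : ℕ => ℝ) (ENNReal.ofReal s) := by
        refine mk _ fun i => ?_
        by_cases hi : x i * y i ≤ 0
        · rw [if_pos hi]
        · rw [if_neg hi, abs_zero]
          exact abs_nonneg _
      have memD : (fun i => if ¬(x i * y i ≤ 0) ∧ ¬(|x i - y i| ≤ σ * max |x i| |y i|)
            then g i - h i else 0) ∈ lp (fun _ : ℕ => ℝ) (ENNReal.ofReal s) := by
        refine mk _ fun i => ?_
        by_cases hi : ¬(x i * y i ≤ 0) ∧ ¬(|x i - y i| ≤ σ * max |x i| |y i|)
        · rw [if_pos hi]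
        · rw [if_neg hi, abs_zero]
          exact abs_nonneg _
      have memE : (fun i => if ¬(x i * y i ≤ 0) ∧ (|x i - y i| ≤ σ * max |x i| |y i|)
            then g i - h i else 0) ∈ lp (fun _ : ℕ => ℝ) (ENNReal.ofReal s) := by
        refine mk _ fun i => ?_
        by_cases hi : ¬(x i * y i ≤ 0) ∧ (|x i - y i| ≤ σ * max |x i| |y i|)
        · rw [if_pos hi]
        · rw [if_neg hi, abs_zero]
          exact abs_nonneg _
      set UC : lp (fun _ : ℕ => ℝ) (ENNReal.ofReal s) :=
        ⟨fun i => if x i * y i ≤ 0 then g i - h i else 0, memC⟩ with hUCdef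
      set UD : lp (fun _ : ℕ => ℝ) (ENNReal.ofReal s) :=
        ⟨fun i => if ¬(x i * y i ≤ 0) ∧ ¬(|x i - y i| ≤ σ * max |x i| |y i|) then g i - h i
          else 0, memD⟩ with hUDdef
      set UE : lp (fun _ : ℕ => ℝ) (ENNReal.ofReal s) :=
        ⟨fun i => if ¬(x i * y i ≤ 0) ∧ (|x i - y i| ≤ σ * max |x i| |y i|) then g i - h i
          else 0, memE⟩ with hUEdef
      have hUCcoe : ⇑UC = fun i => if x i * y i ≤ 0 then g i - h i else 0 := rfl
      have hUDcoe : ⇑UD = fun i =>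
          if ¬(x i * y i ≤ 0) ∧ ¬(|x i - y i| ≤ σ * max |x i| |y i|) then g i - h i else 0 :=
        rfl
      have hUEcoe : ⇑UE = fun i =>
          if ¬(x i * y i ≤ 0) ∧ (|x i - y i| ≤ σ * max |x i| |y i|) then g i - h i else 0 :=
        rfl
      have hsplit : Gx - Gy = UC + UD + UE := by
        apply lp.ext
        funext i
        rw [lp.coeFn_sub, lp.coeFn_add, lp.coeFn_add]
        simp only [hUCcoe, hUDcoe, hUEcoe, Pi.add_apply, Pi.sub_apply]
        show g i - h i = _
        by_cases hi : x i * y i ≤ 0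
        · simp [hi]
        · by_cases hi2 : |x i - y i| ≤ σ * max |x i| |y i|
          · simp [hi, hi2]
          · simp [hi, hi2]
      have norm_le_gen : ∀ (U : lp (fun _ : ℕ => ℝ) (ENNReal.ofReal s)) (C : ℝ), 0 ≤ C →
          (∑' i, ‖U i‖ ^ s) ≤ C ^ s → ‖U‖ ≤ C := by
        intro U C hC hsum
        apply (Real.rpow_le_rpow_iff (norm_nonneg _) hC hs0).1
        have h1 := lp.norm_rpow_eq_tsum hrpos U
        rw [hrt] at h1
        rw [h1]
        exact hsum
      -- bound on UC
      have sumUC : Summable fun i => ‖UC i‖ ^ s := by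
        have := (memℓp_gen_iff hrpos).1 (lp.memℓp UC)
        rwa [hrt] at this
      have hUCle : ‖UC‖ ≤ ‖x - y‖ ^ p := by
        apply norm_le_gen _ _ (by positivity)
        have hpt : ∀ i, ‖UC i‖ ^ s ≤ ‖(x - y) i‖ ^ (p * s) := by
          intro i
          rw [hxyapp i, Real.norm_eq_abs, Real.norm_eq_abs,
            Real.rpow_mul (abs_nonneg (x i - y i))]
          simp only [hUCcoe]
          by_cases hi : x i * y i ≤ 0
          · rw [if_pos hi]
            exact Real.rpow_le_rpow (abs_nonneg _) (upper_C hp1 hi) hs0.le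
          · rw [if_neg hi, abs_zero, Real.zero_rpow (ne_of_gt hs0)]
            positivity
        calc ∑' i, ‖UC i‖ ^ s ≤ ∑' i, ‖(x - y) i‖ ^ (p * s) :=
              Summable.tsum_le_tsum hpt sumUC (base_sum (x - y))
          _ = ‖x - y‖ ^ (p * s) := hnormxy.symm
          _ = (‖x - y‖ ^ p) ^ s := Real.rpow_mul (norm_nonneg _) _ _
      -- bound on UD
      have sumUD : Summable fun i => ‖UD i‖ ^ s := by
        have := (memℓp_gen_iff hrpos).1 (lp.memℓp UD)
        rwa [hrt] at this
      have hUDle : ‖UD‖ ≤ ‖x - y‖ ^ (p / 2) := by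
        apply norm_le_gen _ _ (by positivity)
        have hpt : ∀ i, ‖UD i‖ ^ s ≤ σ⁻¹ ^ (p * s) * ‖(x - y) i‖ ^ (p * s) := by
          intro i
          rw [hxyapp i, Real.norm_eq_abs, Real.norm_eq_abs]
          simp only [hUDcoe]
          by_cases hi : ¬(x i * y i ≤ 0) ∧ ¬(|x i - y i| ≤ σ * max |x i| |y i|)
          · rw [if_pos hi]
            have hpos : 0 < x i * y i := not_le.1 hi.1
            have hmax : max |x i| |y i| ≤ |x i - y i| / σ := by
              rw [le_div_iff₀ hσpos]
              have h2 := not_le.1 hi.2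
              linarith
            have h1 : |g i - h i| ≤ (|x i - y i| / σ) ^ p :=
              (upper_D hp1 hpos).trans
                (Real.rpow_le_rpow (le_trans (abs_nonneg _) (le_max_left _ _)) hmax hp0.le)
            have e : ((|x i - y i| / σ) ^ p) ^ s = σ⁻¹ ^ (p * s) * |x i - y i| ^ (p * s) := by
              rw [← Real.rpow_mul (by positivity : (0:ℝ) ≤ |x i - y i| / σ),
                Real.div_rpow (abs_nonneg _) hσpos.le, Real.inv_rpow hσpos.le,
                div_eq_inv_mul]
            rw [← e]
            exact Real.rpow_le_rpow (abs_nonneg _) h1 hs0.le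
          · rw [if_neg hi, abs_zero, Real.zero_rpow (ne_of_gt hs0)]
            positivity
        have halg : σ⁻¹ ^ (p * s) * ‖x - y‖ ^ (p * s) = (‖x - y‖ ^ (p / 2)) ^ s := by
          have hσ2 : σ * σ = σ ^ (2:ℝ) := by
            rw [show ((2:ℝ)) = ((2:ℕ):ℝ) by norm_num, Real.rpow_natCast]
            ring
          have h1 : σ⁻¹ ^ (p * s) * (σ * σ) ^ (p * s) = σ ^ (p * s) := by
            rw [← Real.mul_rpow (inv_nonneg.2 hσpos.le) (mul_nonneg hσpos.le hσpos.le)]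
            congr 1
            field_simp
          have h2 : ((σ * σ) ^ (p / 2)) ^ s = σ ^ (p * s) := by
            rw [hσ2, ← Real.rpow_mul hσpos.le, ← Real.rpow_mul hσpos.le]
            congr 1
            ring
          rw [← hσsq, h1, h2]
        calc ∑' i, ‖UD i‖ ^ s ≤ ∑' i, σ⁻¹ ^ (p * s) * ‖(x - y) i‖ ^ (p * s) :=
              Summable.tsum_le_tsum hpt sumUD ((base_sum (x - y)).mul_left _)
          _ = σ⁻¹ ^ (p * s) * ∑' i, ‖(x - y) i‖ ^ (p * s) := tsum_mul_left
          _ = σ⁻¹ ^ (p * s) * ‖x - y‖ ^ (p * s) := by rw [hnormxy]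
          _ = (‖x - y‖ ^ (p / 2)) ^ s := halg
      -- bound on UE
      have memAX : Memℓp (fun i => |g i|) (ENNReal.ofReal s) :=
        memℓp_of_abs_le hrpos Gx (fun i => (abs_abs (g i)).le)
      have memAY : Memℓp (fun i => |h i|) (ENNReal.ofReal s) :=
        memℓp_of_abs_le hrpos Gy (fun i => (abs_abs (h i)).le)
      set AX : lp (fun _ : ℕ => ℝ) (ENNReal.ofReal s) := ⟨fun i => |g i|, memAX⟩ with hAXdef
      set AY : lp (fun _ : ℕ => ℝ) (ENNReal.ofReal s) := ⟨fun i => |h i|, memAY⟩ with hAYdef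
      have hAXnorm : ‖AX‖ = 1 := by
        rw [← hGxnorm]
        exact le_antisymm (lp_norm_le_of_abs_le hrpos (fun i => (abs_abs (g i)).le))
          (lp_norm_le_of_abs_le hrpos (fun i => (abs_abs (g i)).ge))
      have hAYnorm : ‖AY‖ = 1 := by
        rw [← hGynorm]
        exact le_antisymm (lp_norm_le_of_abs_le hrpos (fun i => (abs_abs (h i)).le))
          (lp_norm_le_of_abs_le hrpos (fun i => (abs_abs (h i)).ge))
      set Z : lp (fun _ : ℕ => ℝ) (ENNReal.ofReal s) := c • (AX + AY) with hZdef
      have hZapp : ∀ i, Z i = c * (|g i| + |h i|) := by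
        intro i
        rw [hZdef, lp.coeFn_smul, lp.coeFn_add]
        rfl
      have hZnorm : ‖Z‖ ≤ 2 * c := by
        calc ‖Z‖ ≤ ‖c‖ * ‖AX + AY‖ :=
              lp.norm_const_smul_le (ENNReal.ofReal_pos.2 hs0).ne' c (AX + AY)
          _ ≤ ‖c‖ * (‖AX‖ + ‖AY‖) :=
              mul_le_mul_of_nonneg_left (norm_add_le _ _) (norm_nonneg c)
          _ = 2 * c := by
              rw [hAXnorm, hAYnorm, Real.norm_eq_abs, abs_of_nonneg hc0]
              ring
      have hptE : ∀ i, |UE i| ≤ |Z i| := by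
        intro i
        rw [hZapp i]
        simp only [hUEcoe]
        have habs' : |c * (|g i| + |h i|)| = c * (|g i| + |h i|) :=
          abs_of_nonneg (mul_nonneg hc0 (by positivity))
        rw [habs']
        by_cases hi : ¬(x i * y i ≤ 0) ∧ (|x i - y i| ≤ σ * max |x i| |y i|)
        · rw [if_pos hi]
          have hpos : 0 < x i * y i := not_le.1 hi.1
          have hkey := upper_E hp1 hpos hσpos.le hσ1 hi.2
          simp only [hgdef, hhdef]
          rw [abs_F hpne, abs_F hpne, hcdef]
          exact hkey
        · rw [if_neg hi, abs_zero]
          exact mul_nonneg hc0 (by positivity)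
      have hUEle : ‖UE‖ ≤ 2 * c := (lp_norm_le_of_abs_le hrpos hptE).trans hZnorm
      -- combine
      calc ‖Gx - Gy‖ = ‖UC + UD + UE‖ := by rw [hsplit]
        _ ≤ ‖UC‖ + ‖UD‖ + ‖UE‖ :=
            (norm_add_le _ _).trans (add_le_add_left (norm_add_le _ _) _)
        _ ≤ ‖x - y‖ ^ p + ‖x - y‖ ^ (p / 2) + 2 * c :=
            add_le_add (add_le_add hUCle hUDle) hUEle
        _ = ‖x - y‖ ^ p + ‖x - y‖ ^ (p / 2) + 2 * (1 - (1 - σ) ^ p) := by rw [hcdef]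
  exact ⟨Gx, Gy, hGxapp, hGyapp, hGxnorm, hGynorm, hlow, hupp⟩
end
end

section
/- Let 1 < p < ∞ and let h ∈ ℓ_1 be finitely supported with h_i ≥ 0 for all i and Σ h_i = 1. Set x = (h_i^{1/p})_{i∈ℕ}. Then x ∈ S(ℓ_p), and for every y ∈ ℓ_p with ‖y‖_p ≤ 1, y_i ≥ 0 for all i, and y_i > 0 for all i ∈ supp h, one has Σ_{i∈supp h} h_i·log(y_i) ≤ (1/p)·Σ_{i∈supp h} h_i·log(h_i), with equality if and only if y = x. -/
open scoped ENNReal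

noncomputable section

/-- For finitely supported nonnegative `h` with `∑ h_i = 1`, the vector `x = (h_i^{1/p})`
lies on `S(ℓ_p)` and is the unique maximizer of the entropy `y ↦ ∑ h_i log y_i` over the
nonnegative part of the unit ball of `ℓ_p`, the maximum value being `(1/p)·∑ h_i log h_i`. -/
theorem entropy_maximizer_lp (p : ℝ) (hp : 1 < p) [Fact (1 ≤ ENNReal.ofReal p)]
    (h : ℕ → ℝ) (hfin : {i : ℕ | h i ≠ 0}.Finite) (hpos : ∀ i, 0 ≤ h i)
    (hsum : ∑ᶠ i, h i = 1) :
    ∃ x : lp (fun _ : ℕ => ℝ) (ENNReal.ofReal p),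
      (∀ i, x i = h i ^ (1 / p)) ∧ ‖x‖ = 1 ∧
      ∀ y : lp (fun _ : ℕ => ℝ) (ENNReal.ofReal p),
        ‖y‖ ≤ 1 → (∀ i, 0 ≤ y i) → (∀ i ∈ {i : ℕ | h i ≠ 0}, 0 < y i) →
          (∑ᶠ i, h i * Real.log (y i)) ≤ (1 / p) * ∑ᶠ i, h i * Real.log (h i) ∧
          ((∑ᶠ i, h i * Real.log (y i)) = (1 / p) * (∑ᶠ i, h i * Real.log (h i)) ↔ y = x) := by
  have hp0 : (0:ℝ) < p := lt_trans one_pos hp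
  have hpne : p ≠ 0 := hp0.ne'
  have htr : (ENNReal.ofReal p).toReal = p := ENNReal.toReal_ofReal hp0.le
  set t : Finset ℕ := hfin.toFinset with ht
  have hmem : ∀ i, i ∈ t ↔ h i ≠ 0 := fun i => hfin.mem_toFinset
  set x0 : ℕ → ℝ := fun i => h i ^ (1/p) with hx0
  have hx0supp : ∀ i ∉ t, x0 i = 0 := by
    intro i hi
    have hz : h i = 0 := by by_contra hne; exact hi ((hmem i).2 hne)
    simp only [hx0, hz, Real.zero_rpow (by positivity : (1:ℝ)/p ≠ 0)]
  have hx0pow : ∀ i, ‖x0 i‖ ^ p = h i := by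
    intro i
    rw [Real.norm_of_nonneg (Real.rpow_nonneg (hpos i) _), ← Real.rpow_mul (hpos i),
      one_div_mul_cancel hpne, Real.rpow_one]
  have hsum' : ∑ i ∈ t, h i = 1 := by
    rw [← hsum, finsum_eq_sum h hfin]
    rfl
  have hx0mem : Memℓp x0 (ENNReal.ofReal p) := by
    apply memℓp_gen
    rw [htr]
    apply summable_of_ne_finset_zero (s := t)
    intro i hi
    rw [hx0pow i]
    by_contra hne; exact hi ((hmem i).2 hne)
  refine ⟨⟨x0, hx0mem⟩, fun i => rfl, ?_, ?_⟩
  · -- norm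
    rw [lp.norm_eq_tsum_rpow (by rw [htr]; exact hp0), htr]
    show (∑' i, ‖x0 i‖ ^ p) ^ (1/p) = 1
    have h1 : (∑' i, ‖x0 i‖ ^ p) = ∑ i ∈ t, ‖x0 i‖ ^ p := by
      apply tsum_eq_sum
      intro i hi
      rw [hx0supp i hi, norm_zero, Real.zero_rpow hpne]
    rw [h1]
    simp_rw [hx0pow]
    rw [hsum', Real.one_rpow]
  · intro y hynorm hy0 hypos
    -- rewrite finsums as finite sums
    have hA : (∑ᶠ i, h i * Real.log (y i)) = ∑ i ∈ t, h i * Real.log (y i) := by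
      apply finsum_eq_sum_of_support_subset
      intro i hi
      simp only [Function.mem_support, ne_eq] at hi
      simp only [ht, Set.Finite.coe_toFinset, Set.mem_setOf_eq]
      intro hz
      exact hi (by rw [hz, zero_mul])
    have hB : (∑ᶠ i, h i * Real.log (h i)) = ∑ i ∈ t, h i * Real.log (h i) := by
      apply finsum_eq_sum_of_support_subset
      intro i hi
      simp only [Function.mem_support, ne_eq] at hi
      simp only [ht, Set.Finite.coe_toFinset, Set.mem_setOf_eq]
      intro hz
      exact hi (by rw [hz, zero_mul])
    rw [hA, hB]
    set A : ℝ := ∑ i ∈ t, h i * Real.log (y i) with hAdef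
    set B : ℝ := ∑ i ∈ t, h i * Real.log (h i) with hBdef
    set S : ℝ := ∑ i ∈ t, ‖y i‖ ^ p with hSdef
    have hnormp : ‖y‖ ^ p ≤ 1 := Real.rpow_le_one (norm_nonneg y) hynorm hp0.le
    have hSle : S ≤ 1 := by
      refine le_trans ?_ hnormp
      have := lp.sum_rpow_le_norm_rpow (p := ENNReal.ofReal p) (by rw [htr]; exact hp0) y t
      rw [htr] at this
      exact this
    -- termwise data
    have hterm : ∀ i ∈ t, p * (h i * Real.log (y i)) - h i * Real.log (h i)
        ≤ ‖y i‖ ^ p - h i := by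
      intro i hi
      have hip : 0 < h i := (hpos i).lt_of_ne (Ne.symm ((hmem i).1 hi))
      have hyp : 0 < y i := hypos i ((hmem i).1 hi)
      have hu : 0 < (y i) ^ p := Real.rpow_pos_of_pos hyp p
      have hlog : Real.log ((y i) ^ p / h i) ≤ (y i) ^ p / h i - 1 :=
        Real.log_le_sub_one_of_pos (div_pos hu hip)
      rw [Real.log_div hu.ne' hip.ne', Real.log_rpow hyp] at hlog
      have := mul_le_mul_of_nonneg_left hlog hip.le
      rw [mul_sub, mul_sub, mul_div_cancel₀ _ hip.ne', mul_one] at this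
      rw [Real.norm_of_nonneg hyp.le]
      linarith
    have hkey : p * A - B ≤ S - 1 := by
      have h1 : p * A - B = ∑ i ∈ t, (p * (h i * Real.log (y i)) - h i * Real.log (h i)) := by
        rw [Finset.sum_sub_distrib, ← Finset.mul_sum]
      have h2 : S - 1 = ∑ i ∈ t, (‖y i‖ ^ p - h i) := by
        rw [Finset.sum_sub_distrib, hsum']
      rw [h1, h2]
      exact Finset.sum_le_sum hterm
    have hineq : A ≤ 1 / p * B := by
      have : p * A ≤ B := by linarith
      rw [one_div]
      calc A = p⁻¹ * (p * A) := by field_simp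
        _ ≤ p⁻¹ * B := by
            apply mul_le_mul_of_nonneg_left this (by positivity)
    refine ⟨hineq, ?_, ?_⟩
    · -- equality ⇒ y = x
      intro heq
      have hAB : p * A = B := by
        rw [heq]; field_simp
      have hS1 : S = 1 := by
        have : (0:ℝ) ≤ S - 1 := by linarith [hkey, hAB]
        linarith
      have htermeq : ∀ i ∈ t, p * (h i * Real.log (y i)) - h i * Real.log (h i)
          = ‖y i‖ ^ p - h i := by
        rw [← Finset.sum_eq_sum_iff_of_le hterm]
        rw [Finset.sum_sub_distrib, ← Finset.mul_sum, Finset.sum_sub_distrib, hsum']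
        rw [← hAdef, ← hBdef, ← hSdef]
        linarith
      apply lp.ext
      funext i
      show y i = x0 i
      by_cases hi : i ∈ t
      · have hip : 0 < h i := (hpos i).lt_of_ne (Ne.symm ((hmem i).1 hi))
        have hyp : 0 < y i := hypos i ((hmem i).1 hi)
        have hu : 0 < (y i) ^ p := Real.rpow_pos_of_pos hyp p
        have heqi := htermeq i hi
        rw [Real.norm_of_nonneg hyp.le] at heqi
        have hdiv : (y i) ^ p / h i = 1 := by
          by_contra hne
          have hlt : Real.log ((y i) ^ p / h i) < (y i) ^ p / h i - 1 :=
            Real.log_lt_sub_one_of_pos (div_pos hu hip) hne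
          rw [Real.log_div hu.ne' hip.ne', Real.log_rpow hyp] at hlt
          have := mul_lt_mul_of_pos_left hlt hip
          rw [mul_sub, mul_sub, mul_div_cancel₀ _ hip.ne', mul_one] at this
          linarith
        have hyi : (y i) ^ p = h i := by
          field_simp at hdiv
          exact hdiv
        have : y i = (h i) ^ (1/p) := by
          rw [← hyi, one_div, Real.rpow_rpow_inv hyp.le hpne]
        exact this
      · have hyz : y i = 0 := by
          have hle : ∑ j ∈ insert i t, ‖y j‖ ^ p ≤ 1 := by
            refine le_trans ?_ hnormp
            have := lp.sum_rpow_le_norm_rpow (p := ENNReal.ofReal p)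
              (by rw [htr]; exact hp0) y (insert i t)
            rw [htr] at this
            exact this
          rw [Finset.sum_insert hi, ← hSdef, hS1] at hle
          have h0 : ‖y i‖ ^ p ≤ 0 := by linarith
          have h1 : ‖y i‖ ^ p = 0 :=
            le_antisymm h0 (Real.rpow_nonneg (norm_nonneg _) p)
          have : ‖y i‖ = 0 := by
            by_contra hne
            exact absurd h1 (Real.rpow_pos_of_pos ((norm_nonneg _).lt_of_ne (Ne.symm hne)) p).ne'
          simpa using this
        rw [hyz, hx0supp i hi]
    · -- y = x ⇒ equality
      intro heq
      subst heq
      show (∑ i ∈ t, h i * Real.log (x0 i)) = 1 / p * B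
      rw [hBdef, Finset.mul_sum]
      apply Finset.sum_congr rfl
      intro i hi
      have hip : 0 < h i := (hpos i).lt_of_ne (Ne.symm ((hmem i).1 hi))
      rw [hx0, Real.log_rpow hip]
      ring
end
end

section
/- There exists a function ψ : (0,1) → (0,∞) with the following property. Let 1 < p < ∞, let ε ∈ (0,1), let h ∈ ℓ_1 be finitely supported with h_i ≥ 0 and Σ h_i = 1, and let v ∈ ℓ_p with ‖v‖_p ≤ 1, v_i ≥ 0 for all i, and v_i > 0 for every i ∈ supp h. If Σ_{i∈supp h} h_i·log(v_i) ≥ (1/p)·Σ_{i∈supp h} h_i·log(h_i) − ψ(ε), then there exists a set A ⊆ supp h such that Σ_{i∈A} h_i > 1 − ε and (1 − ε)·h_i^{1/p} ≤ v_i ≤ (1 + ε)·h_i^{1/p} for every i ∈ A. -/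
open scoped ENNReal

noncomputable section

private def phi (t : ℝ) : ℝ := t - 1 - Real.log t

private def psi (ε : ℝ) : ℝ := ε / 2 * min (phi (1 - ε)) (phi (1 + ε))

private lemma phi_nonneg {t : ℝ} (ht : 0 < t) : 0 ≤ phi t := by
  have := Real.log_le_sub_one_of_pos ht
  unfold phi; linarith

private lemma phi_pos {t : ℝ} (ht : 0 < t) (hne : t ≠ 1) : 0 < phi t := by
  have := Real.log_lt_sub_one_of_pos ht hne
  unfold phi; linarith

private lemma phi_deriv {x : ℝ} (hx : x ≠ 0) : deriv phi x = 1 - x⁻¹ :=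
  (((hasDerivAt_id x).sub_const 1).sub (Real.hasDerivAt_log hx)).deriv

private lemma phi_cont : ContinuousOn phi {x : ℝ | x ≠ 0} := by
  unfold phi
  exact (continuousOn_id.sub continuousOn_const).sub
    (Real.continuousOn_log.mono (fun x hx => hx))

private lemma phi_anti : StrictAntiOn phi (Set.Ioc 0 1) := by
  apply strictAntiOn_of_deriv_neg (convex_Ioc 0 1)
    (phi_cont.mono (fun x hx => ne_of_gt hx.1))
  intro x hx
  rw [interior_Ioc] at hx
  rw [phi_deriv (ne_of_gt hx.1)]
  have : 1 < x⁻¹ := (one_lt_inv₀ hx.1).mpr hx.2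
  linarith

private lemma phi_mono : StrictMonoOn phi (Set.Ici 1) := by
  apply strictMonoOn_of_deriv_pos (convex_Ici 1)
    (phi_cont.mono (fun x hx => by
      simp only [Set.mem_Ici, Set.mem_setOf_eq] at hx ⊢
      intro h; rw [h] at hx; norm_num at hx))
  intro x hx
  rw [interior_Ici] at hx
  have hx1 : (1 : ℝ) < x := hx
  rw [phi_deriv (by linarith)]
  have : x⁻¹ < 1 := inv_lt_one_of_one_lt₀ hx1
  linarith

private lemma phi_window {ε w : ℝ} (hε0 : 0 < ε) (hε1 : ε < 1) (hw : 0 < w)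
    (hle : phi w ≤ min (phi (1 - ε)) (phi (1 + ε))) : 1 - ε ≤ w ∧ w ≤ 1 + ε := by
  constructor
  · by_contra hlt
    push_neg at hlt
    have h1 : phi (1 - ε) < phi w :=
      phi_anti ⟨hw, by linarith⟩ ⟨by linarith, by linarith⟩ hlt
    have := min_le_left (phi (1 - ε)) (phi (1 + ε))
    linarith
  · by_contra hlt
    push_neg at hlt
    have h1 : phi (1 + ε) < phi w :=
      phi_mono (by simp only [Set.mem_Ici]; linarith) (by simp only [Set.mem_Ici]; linarith) hlt
    have := min_le_right (phi (1 - ε)) (phi (1 + ε))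
    linarith

/-- There is a function `ψ : (0,1) → (0,∞)` such that any nonnegative `v` in the unit ball
of `ℓ_p` whose entropy against `h` is within `ψ(ε)` of the maximal value
`(1/p)·∑ h_i log h_i` agrees, up to factor `1 ± ε`, with the maximizer `(h_i^{1/p})`
on a subset of `supp h` carrying `h`-mass more than `1 - ε`. -/
theorem entropy_near_maximizer :
    ∃ ψ : ℝ → ℝ, (∀ ε : ℝ, 0 < ε → ε < 1 → 0 < ψ ε) ∧
      ∀ (p : ℝ), 1 < p → ∀ (_ : Fact (1 ≤ ENNReal.ofReal p)),
        ∀ ε : ℝ, 0 < ε → ε < 1 →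
        ∀ h : ℕ → ℝ, {i : ℕ | h i ≠ 0}.Finite → (∀ i, 0 ≤ h i) → (∑ᶠ i, h i = 1) →
        ∀ v : lp (fun _ : ℕ => ℝ) (ENNReal.ofReal p),
          ‖v‖ ≤ 1 → (∀ i, 0 ≤ v i) → (∀ i ∈ {i : ℕ | h i ≠ 0}, 0 < v i) →
          (1 / p) * (∑ᶠ i, h i * Real.log (h i)) - ψ ε ≤ (∑ᶠ i, h i * Real.log (v i)) →
          ∃ A : Set ℕ, A ⊆ {i : ℕ | h i ≠ 0} ∧ 1 - ε < (∑ᶠ i ∈ A, h i) ∧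
            ∀ i ∈ A, (1 - ε) * h i ^ (1 / p) ≤ v i ∧ v i ≤ (1 + ε) * h i ^ (1 / p) := by
  have hpsi_pos : ∀ ε : ℝ, 0 < ε → ε < 1 → 0 < psi ε := by
    intro ε h0 h1
    have h1' : 0 < phi (1 - ε) := phi_pos (by linarith) (by intro hc; linarith)
    have h2' : 0 < phi (1 + ε) := phi_pos (by linarith) (by intro hc; linarith)
    exact mul_pos (by linarith) (lt_min h1' h2')
  refine ⟨psi, hpsi_pos, ?_⟩
  intro p hp hFact ε hε0 hε1 h hfin hh0 hsum v hv1 hv0 hvpos hineq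
  haveI := hFact
  have hp0 : 0 < p := by linarith
  set m := min (phi (1 - ε)) (phi (1 + ε)) with hm
  have hm0 : 0 < m :=
    lt_min (phi_pos (by linarith) (by intro hc; linarith))
      (phi_pos (by linarith) (by intro hc; linarith))
  have hψ : psi ε = ε / 2 * m := rfl
  set s : Finset ℕ := hfin.toFinset with hs
  have hmem : ∀ i, i ∈ s ↔ h i ≠ 0 := fun i => hfin.mem_toFinset
  have hpos : ∀ i ∈ s, 0 < h i := fun i hi => (hh0 i).lt_of_ne (Ne.symm ((hmem i).1 hi))
  have hsupp : Function.support h ⊆ ↑s := fun i hi => (hmem i).2 hi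
  have hsuppl : ∀ f : ℕ → ℝ, Function.support (fun i => h i * f i) ⊆ ↑s := by
    intro f i hi
    exact hsupp (left_ne_zero_of_mul hi)
  rw [finsum_eq_finset_sum_of_support_subset h hsupp] at hsum
  rw [finsum_eq_finset_sum_of_support_subset _ (hsuppl (fun i => Real.log (h i))),
    finsum_eq_finset_sum_of_support_subset _ (hsuppl (fun i => Real.log (v i)))] at hineq
  -- ℓ_p bound on the support
  have hpt : (ENNReal.ofReal p).toReal = p := ENNReal.toReal_ofReal hp0.le
  have hvsum : ∑ i ∈ s, (v i) ^ p ≤ 1 := by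
    have hsummable : Summable fun i => ‖v i‖ ^ p := by
      have := (lp.memℓp v).summable (by rw [hpt]; exact hp0)
      rwa [hpt] at this
    have h1 : ∑ i ∈ s, ‖v i‖ ^ p ≤ ∑' i, ‖v i‖ ^ p :=
      Summable.sum_le_tsum s (fun i _ => Real.rpow_nonneg (norm_nonneg _) p) hsummable
    have h2 : ∑' i, ‖v i‖ ^ p = ‖v‖ ^ p := by
      have := lp.norm_rpow_eq_tsum (p := ENNReal.ofReal p) (by rw [hpt]; exact hp0) v
      rw [hpt] at this
      exact this.symm
    have h3 : ‖v‖ ^ p ≤ 1 := Real.rpow_le_one (norm_nonneg _) hv1 hp0.le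
    calc ∑ i ∈ s, (v i) ^ p = ∑ i ∈ s, ‖v i‖ ^ p := by
          refine Finset.sum_congr rfl fun i _ => ?_
          rw [Real.norm_of_nonneg (hv0 i)]
      _ ≤ 1 := by linarith
  -- the rescaled vector
  set w : ℕ → ℝ := fun i => v i / (h i) ^ (1 / p) with hw
  have hwpos : ∀ i ∈ s, 0 < w i := fun i hi =>
    div_pos (hvpos i ((hmem i).1 hi)) (Real.rpow_pos_of_pos (hpos i hi) _)
  have hwp : ∀ i ∈ s, h i * (w i) ^ p = (v i) ^ p := by
    intro i hi
    have hhi := hpos i hi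
    have hb : ((h i) ^ (1 / p)) ^ p = h i := by
      rw [← Real.rpow_mul hhi.le, one_div_mul_cancel hp0.ne', Real.rpow_one]
    rw [hw]
    simp only
    rw [Real.div_rpow (hv0 i) (Real.rpow_nonneg hhi.le _), hb,
      mul_div_cancel₀ _ hhi.ne']
  have hwlog : ∀ i ∈ s, Real.log (w i) = Real.log (v i) - 1 / p * Real.log (h i) := by
    intro i hi
    rw [hw]
    simp only
    rw [Real.log_div (hvpos i ((hmem i).1 hi)).ne' (Real.rpow_pos_of_pos (hpos i hi) _).ne',
      Real.log_rpow (hpos i hi)]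
  -- the key Markov-type bound
  have key : ∑ i ∈ s, h i * phi (w i) ≤ ε / 2 * m := by
    have e1 : ∀ i ∈ s, phi (w i) ≤ ((w i) ^ p - 1) / p - Real.log (w i) := by
      intro i hi
      have hwi := hwpos i hi
      have hb : 1 + p * (w i - 1) ≤ (w i) ^ p := by
        have := one_add_mul_self_le_rpow_one_add (s := w i - 1) (by linarith) hp.le
        simpa using this
      have h2 : w i - 1 ≤ ((w i) ^ p - 1) / p := by
        rw [le_div_iff₀ hp0]; nlinarith
      unfold phi
      linarith
    have e2 : ∑ i ∈ s, h i * phi (w i)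
        ≤ ∑ i ∈ s, h i * (((w i) ^ p - 1) / p - Real.log (w i)) :=
      Finset.sum_le_sum fun i hi => mul_le_mul_of_nonneg_left (e1 i hi) (hh0 i)
    have e3 : ∑ i ∈ s, h i * (((w i) ^ p - 1) / p - Real.log (w i))
        = (∑ i ∈ s, (v i) ^ p) / p - 1 / p - ∑ i ∈ s, h i * Real.log (w i) := by
      have hterm : ∀ i ∈ s, h i * (((w i) ^ p - 1) / p - Real.log (w i))
          = (v i) ^ p / p - h i / p - h i * Real.log (w i) := by
        intro i hi
        rw [← hwp i hi]
        field_simp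
      rw [Finset.sum_congr rfl hterm]
      rw [Finset.sum_sub_distrib, Finset.sum_sub_distrib, ← Finset.sum_div, ← Finset.sum_div,
        hsum]
    have e4 : ∑ i ∈ s, h i * Real.log (w i)
        = (∑ i ∈ s, h i * Real.log (v i)) - 1 / p * ∑ i ∈ s, h i * Real.log (h i) := by
      calc ∑ i ∈ s, h i * Real.log (w i)
          = ∑ i ∈ s, (h i * Real.log (v i) - 1 / p * (h i * Real.log (h i))) :=
            Finset.sum_congr rfl fun i hi => by rw [hwlog i hi]; ring
        _ = _ := by rw [Finset.sum_sub_distrib, ← Finset.mul_sum]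
    have hvp : (∑ i ∈ s, (v i) ^ p) / p ≤ 1 / p := by gcongr
    rw [hψ] at hineq
    linarith
  -- choose the good set
  set A : Finset ℕ := s.filter (fun i => phi (w i) ≤ m) with hA
  have hAs : A ⊆ s := Finset.filter_subset _ _
  have hAsub : (↑A : Set ℕ) ⊆ {i : ℕ | h i ≠ 0} := fun i hi => (hmem i).1 (hAs hi)
  have htail : ∑ i ∈ s \ A, h i ≤ ε / 2 := by
    have h1 : ∀ i ∈ s \ A, h i * m ≤ h i * phi (w i) := by
      intro i hi
      obtain ⟨his, hnA⟩ := Finset.mem_sdiff.1 hi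
      have hgt : m < phi (w i) := by
        by_contra hc
        push_neg at hc
        exact hnA (Finset.mem_filter.2 ⟨his, hc⟩)
      exact mul_le_mul_of_nonneg_left hgt.le (hh0 i)
    have h2 : (∑ i ∈ s \ A, h i) * m ≤ ∑ i ∈ s \ A, h i * phi (w i) := by
      rw [Finset.sum_mul]; exact Finset.sum_le_sum h1
    have h3 : ∑ i ∈ s \ A, h i * phi (w i) ≤ ∑ i ∈ s, h i * phi (w i) :=
      Finset.sum_le_sum_of_subset_of_nonneg Finset.sdiff_subset
        (fun i hi _ => mul_nonneg (hh0 i) (phi_nonneg (hwpos i hi)))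
    have h4 : (∑ i ∈ s \ A, h i) * m ≤ ε / 2 * m := le_trans h2 (le_trans h3 key)
    exact le_of_mul_le_mul_right h4 hm0
  have hAsum : ∑ i ∈ A, h i = 1 - ∑ i ∈ s \ A, h i := by
    have := Finset.sum_sdiff (f := h) hAs
    linarith
  refine ⟨↑A, hAsub, ?_, ?_⟩
  · rw [finsum_mem_coe_finset]
    linarith
  · intro i hi
    have hiA : i ∈ A := hi
    obtain ⟨his, hphi⟩ := Finset.mem_filter.1 hiA
    have hwin := phi_window hε0 hε1 (hwpos i his) (by rw [← hm]; exact hphi)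
    have hbpos : 0 < (h i) ^ (1 / p) := Real.rpow_pos_of_pos (hpos i his) _
    have hvv : w i * (h i) ^ (1 / p) = v i := div_mul_cancel₀ _ hbpos.ne'
    constructor
    · calc (1 - ε) * (h i) ^ (1 / p) ≤ w i * (h i) ^ (1 / p) :=
            mul_le_mul_of_nonneg_right hwin.1 hbpos.le
        _ = v i := hvv
    · calc v i = w i * (h i) ^ (1 / p) := hvv.symm
        _ ≤ (1 + ε) * (h i) ^ (1 / p) := mul_le_mul_of_nonneg_right hwin.2 hbpos.le
end
end

section
/- Let 1 < p < ∞ and let h₁, h₂ ∈ ℓ_1 be finitely supported with h₁_i ≥ 0, h₂_i ≥ 0 for all i, Σ h₁_i = Σ h₂_i = 1 and ‖h₁ − h₂‖_1 ≤ 1. Set x₁ = (h₁_i^{1/p})_{i∈ℕ} and x₂ = (h₂_i^{1/p})_{i∈ℕ}, so that x₁, x₂ ∈ S(ℓ_p). Then ‖(x₁ + x₂)/2‖_p ≥ 1 − ‖h₁ − h₂‖_1^{1/2}. -/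
open scoped ENNReal

noncomputable section

lemma aux_norm_eq_one (p : ℝ) (hp0 : 0 < p) [Fact (1 ≤ ENNReal.ofReal p)]
    (h : ℕ → ℝ) (hfin : {i : ℕ | h i ≠ 0}.Finite) (hpos : ∀ i, 0 ≤ h i)
    (hsum : ∑ᶠ i, h i = 1)
    (x : lp (fun _ : ℕ => ℝ) (ENNReal.ofReal p)) (hx : ∀ i, x i = h i ^ (1 / p)) :
    ‖x‖ = 1 := by
  have hq : (ENNReal.ofReal p).toReal = p := ENNReal.toReal_ofReal hp0.le
  have hqpos : 0 < (ENNReal.ofReal p).toReal := by rw [hq]; exact hp0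
  have key : ∀ i, ‖x i‖ ^ p = h i := by
    intro i
    rw [hx i, Real.norm_eq_abs, abs_of_nonneg (Real.rpow_nonneg (hpos i) _),
      ← Real.rpow_mul (hpos i), one_div_mul_cancel hp0.ne', Real.rpow_one]
  have h1 : ‖x‖ ^ p = 1 := by
    have := lp.norm_rpow_eq_tsum hqpos x
    rw [hq] at this
    rw [this]
    have hsupp : ∀ i ∉ hfin.toFinset, ‖x i‖ ^ p = 0 := by
      intro i hi
      simp only [Set.Finite.mem_toFinset, Set.mem_setOf_eq, not_not] at hi
      rw [key i, hi]
    rw [tsum_eq_sum hsupp]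
    have := finsum_eq_sum_of_support_subset h
      (s := hfin.toFinset) (by intro i hi; simpa using hi)
    rw [this] at hsum
    rw [← hsum]
    exact Finset.sum_congr rfl fun i _ => key i
  calc ‖x‖ = (‖x‖ ^ p) ^ (1 / p) := by
        rw [← Real.rpow_mul (norm_nonneg x), mul_one_div_cancel hp0.ne', Real.rpow_one]
    _ = 1 := by rw [h1, Real.one_rpow]

/-- If `h₁, h₂` are finitely supported nonnegative sequences with `∑ h₁ = ∑ h₂ = 1` and
`‖h₁ - h₂‖₁ ≤ 1`, and `x₁ = (h₁_i^{1/p})`, `x₂ = (h₂_i^{1/p})` in `ℓ_p`, then `x₁, x₂` are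
unit vectors and `‖(x₁ + x₂)/2‖_p ≥ 1 - ‖h₁ - h₂‖₁^{1/2}`. -/
theorem midpoint_estimate_for_entropy_maximizers (p : ℝ) (hp : 1 < p)
    [Fact (1 ≤ ENNReal.ofReal p)]
    (h₁ h₂ : ℕ → ℝ)
    (hfin₁ : {i : ℕ | h₁ i ≠ 0}.Finite) (hfin₂ : {i : ℕ | h₂ i ≠ 0}.Finite)
    (hpos₁ : ∀ i, 0 ≤ h₁ i) (hpos₂ : ∀ i, 0 ≤ h₂ i)
    (hsum₁ : ∑ᶠ i, h₁ i = 1) (hsum₂ : ∑ᶠ i, h₂ i = 1)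
    (hdist : (∑ᶠ i, |h₁ i - h₂ i|) ≤ 1)
    (x₁ x₂ : lp (fun _ : ℕ => ℝ) (ENNReal.ofReal p))
    (hx₁ : ∀ i, x₁ i = h₁ i ^ (1 / p)) (hx₂ : ∀ i, x₂ i = h₂ i ^ (1 / p)) :
    ‖x₁‖ = 1 ∧ ‖x₂‖ = 1 ∧
      1 - Real.sqrt (∑ᶠ i, |h₁ i - h₂ i|) ≤ ‖(1 / 2 : ℝ) • (x₁ + x₂)‖ := by
  have hp0 : 0 < p := lt_trans one_pos hp
  have hq : (ENNReal.ofReal p).toReal = p := ENNReal.toReal_ofReal hp0.le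
  have hqpos : 0 < (ENNReal.ofReal p).toReal := by rw [hq]; exact hp0
  refine ⟨aux_norm_eq_one p hp0 h₁ hfin₁ hpos₁ hsum₁ x₁ hx₁,
    aux_norm_eq_one p hp0 h₂ hfin₂ hpos₂ hsum₂ x₂ hx₂, ?_⟩
  set s : Finset ℕ := (hfin₁.union hfin₂).toFinset with hs
  have hs₁ : Function.support h₁ ⊆ s := by
    intro i hi; rw [hs, Set.Finite.coe_toFinset]; exact Set.mem_union_left _ hi
  have hs₂ : Function.support h₂ ⊆ s := by
    intro i hi; rw [hs, Set.Finite.coe_toFinset]; exact Set.mem_union_right _ hi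
  have hzero : ∀ i ∉ s, h₁ i = 0 ∧ h₂ i = 0 := by
    intro i hi
    simp only [hs, Set.Finite.mem_toFinset, Set.mem_union, Set.mem_setOf_eq, not_or,
      not_not] at hi
    exact hi
  -- δ
  set δ : ℝ := ∑ᶠ i, |h₁ i - h₂ i| with hδ
  have hδs : δ = ∑ i ∈ s, |h₁ i - h₂ i| := by
    apply finsum_eq_sum_of_support_subset
    intro i hi
    by_contra hns
    obtain ⟨e1, e2⟩ := hzero i hns
    simp [Function.mem_support, e1, e2] at hi
  have hδ0 : 0 ≤ δ := by
    rw [hδs]; exact Finset.sum_nonneg fun i _ => abs_nonneg _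
  have hsum₁' : ∑ i ∈ s, h₁ i = 1 := by
    rw [← finsum_eq_sum_of_support_subset h₁ hs₁]; exact hsum₁
  have hsum₂' : ∑ i ∈ s, h₂ i = 1 := by
    rw [← finsum_eq_sum_of_support_subset h₂ hs₂]; exact hsum₂
  -- sum of mins
  have hmin : ∑ i ∈ s, min (h₁ i) (h₂ i) = 1 - δ / 2 := by
    have : ∀ i, min (h₁ i) (h₂ i) = (h₁ i + h₂ i - |h₁ i - h₂ i|) / 2 := by
      intro i
      rcases le_total (h₁ i) (h₂ i) with h | h
      · rw [min_eq_left h, abs_of_nonpos (by linarith)]; ring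
      · rw [min_eq_right h, abs_of_nonneg (by linarith)]; ring
    calc ∑ i ∈ s, min (h₁ i) (h₂ i)
        = ∑ i ∈ s, (h₁ i + h₂ i - |h₁ i - h₂ i|) / 2 :=
          Finset.sum_congr rfl fun i _ => this i
      _ = (∑ i ∈ s, h₁ i + ∑ i ∈ s, h₂ i - ∑ i ∈ s, |h₁ i - h₂ i|) / 2 := by
          rw [← Finset.sum_div, Finset.sum_sub_distrib, Finset.sum_add_distrib]
      _ = 1 - δ / 2 := by rw [hsum₁', hsum₂', ← hδs]; ring
  -- midpoint coordinates
  set m : lp (fun _ : ℕ => ℝ) (ENNReal.ofReal p) := (1 / 2 : ℝ) • (x₁ + x₂) with hm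
  have hmc : ∀ i, m i = (h₁ i ^ (1 / p) + h₂ i ^ (1 / p)) / 2 := by
    intro i
    rw [hm]
    have : ((1 / 2 : ℝ) • (x₁ + x₂) : lp (fun _ : ℕ => ℝ) (ENNReal.ofReal p)) i
        = (1 / 2 : ℝ) * ((x₁ i) + (x₂ i)) := by
      simp [lp.coeFn_smul, lp.coeFn_add]; change (2⁻¹ : ℝ) * x₁ i + (2⁻¹ : ℝ) * x₂ i = _; ring
    rw [this, hx₁, hx₂]; ring
  -- pointwise lower bound
  have hpt : ∀ i, min (h₁ i) (h₂ i) ≤ ‖m i‖ ^ p := by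
    intro i
    have hmin0 : 0 ≤ min (h₁ i) (h₂ i) := le_min (hpos₁ i) (hpos₂ i)
    have h1 : (min (h₁ i) (h₂ i)) ^ (1 / p) ≤ (h₁ i ^ (1 / p) + h₂ i ^ (1 / p)) / 2 := by
      have a1 : (min (h₁ i) (h₂ i)) ^ (1 / p) ≤ h₁ i ^ (1 / p) :=
        Real.rpow_le_rpow hmin0 (min_le_left _ _) (one_div_nonneg.mpr hp0.le)
      have a2 : (min (h₁ i) (h₂ i)) ^ (1 / p) ≤ h₂ i ^ (1 / p) :=
        Real.rpow_le_rpow hmin0 (min_le_right _ _) (one_div_nonneg.mpr hp0.le)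
      linarith
    have h2 : ((min (h₁ i) (h₂ i)) ^ (1 / p)) ^ p ≤
        ((h₁ i ^ (1 / p) + h₂ i ^ (1 / p)) / 2) ^ p :=
      Real.rpow_le_rpow (Real.rpow_nonneg hmin0 _) h1 hp0.le
    rw [← Real.rpow_mul hmin0, one_div_mul_cancel hp0.ne', Real.rpow_one] at h2
    rw [hmc i, Real.norm_eq_abs, abs_of_nonneg (by
      have := Real.rpow_nonneg (hpos₁ i) (1 / p)
      have := Real.rpow_nonneg (hpos₂ i) (1 / p)
      linarith)]
    exact h2
  -- sum bound
  have hsumm : 1 - δ / 2 ≤ ‖m‖ ^ p := by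
    have hnm := lp.norm_rpow_eq_tsum hqpos m
    rw [hq] at hnm
    rw [hnm, ← hmin]
    have hsummable : Summable (fun i => ‖m i‖ ^ p) := by
      have := (lp.memℓp m).summable hqpos
      rwa [hq] at this
    have hminsum : Summable (fun i => min (h₁ i) (h₂ i)) := by
      apply summable_of_ne_finset_zero (s := s)
      intro i hi
      obtain ⟨e1, e2⟩ := hzero i hi
      simp [e1, e2]
    have := Summable.tsum_le_tsum (f := fun i => min (h₁ i) (h₂ i)) hpt hminsum hsummable
    refine le_trans (le_of_eq ?_) this
    rw [tsum_eq_sum (s := s) (fun i hi => by obtain ⟨e1, e2⟩ := hzero i hi; simp [e1, e2])]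
  -- conclude
  have hδhalf : δ / 2 ≤ 1 / 2 := by linarith
  have hbase : (0:ℝ) < 1 - δ / 2 := by linarith
  have step1 : (1 - δ / 2 : ℝ) ^ (1 / p) ≤ ‖m‖ := by
    have := Real.rpow_le_rpow hbase.le hsumm (by positivity : (0:ℝ) ≤ 1 / p)
    rwa [← Real.rpow_mul (norm_nonneg m), mul_one_div_cancel hp0.ne',
      Real.rpow_one] at this
  have step2 : (1 - δ / 2 : ℝ) ≤ (1 - δ / 2 : ℝ) ^ (1 / p) := by
    have := Real.rpow_le_rpow_of_exponent_ge hbase (by linarith : (1 - δ / 2 : ℝ) ≤ 1)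
      (by rw [div_le_one hp0]; linarith : 1 / p ≤ (1:ℝ))
    rwa [Real.rpow_one] at this
  have hsle1 : Real.sqrt δ ≤ 1 := Real.sqrt_le_one.mpr hdist
  have step3 : δ ≤ Real.sqrt δ := by
    nlinarith [Real.sq_sqrt hδ0, Real.sqrt_nonneg δ]
  linarith
end
end

section
/- Let X and Y be real normed spaces and let F : S(X) → S(Y) be a uniform homeomorphism. Define F̄ : Ba(X) → Ba(Y) by F̄(x) = ‖x‖·F(x/‖x‖) for x ≠ 0 and F̄(0) = 0. Then F̄ is a uniform homeomorphism between the closed unit balls Ba(X) and Ba(Y). -/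
noncomputable section

open Metric

namespace UHExt

variable {X Y : Type*} [NormedAddCommGroup X] [NormedSpace ℝ X]
  [NormedAddCommGroup Y] [NormedSpace ℝ Y]

lemma unit_mem {x : X} (hx : x ≠ 0) : ‖x‖⁻¹ • x ∈ sphere (0 : X) 1 := by
  have h := norm_ne_zero_iff.mpr hx
  simp [mem_sphere_zero_iff_norm, norm_smul, abs_of_nonneg (norm_nonneg x),
    inv_mul_cancel₀ h]

lemma sub_of_empty_sphere (h : ∀ u : X, u ∉ sphere (0 : X) 1) (x : X) : x = 0 := by
  by_contra hx
  exact h _ (unit_mem hx)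

open Classical in
/-- The homogeneous extension. -/
def extFun (F : sphere (0 : X) 1 → sphere (0 : Y) 1) (xb : closedBall (0 : X) 1) :
    closedBall (0 : Y) 1 :=
  if hx : (xb : X) = 0 then ⟨0, by simp⟩
  else ⟨‖(xb : X)‖ • (F ⟨‖(xb : X)‖⁻¹ • (xb : X), unit_mem hx⟩ : Y), by
    have h1 : ‖(F ⟨‖(xb : X)‖⁻¹ • (xb : X), unit_mem hx⟩ : Y)‖ = 1 :=
      mem_sphere_zero_iff_norm.mp (F _).2
    have h2 : ‖(xb : X)‖ ≤ 1 := mem_closedBall_zero_iff.mp xb.2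
    simp [mem_closedBall_zero_iff, norm_smul, h1, abs_of_nonneg (norm_nonneg _), h2]⟩

lemma extFun_spec (F : sphere (0 : X) 1 → sphere (0 : Y) 1)
    (xb : closedBall (0 : X) 1) (u : sphere (0 : X) 1) (t : ℝ)
    (ht : 0 ≤ t) (hx : (xb : X) = t • (u : X)) :
    (extFun F xb : Y) = t • (F u : Y) := by
  have hu : ‖(u : X)‖ = 1 := mem_sphere_zero_iff_norm.mp u.2
  by_cases h0 : (xb : X) = 0
  · have hu0 : (u : X) ≠ 0 := by
      intro h; rw [h] at hu; simp at hu
    have ht0 : t = 0 := by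
      rcases smul_eq_zero.mp (hx ▸ h0) with h | h
      · exact h
      · exact absurd h hu0
    simp [extFun, h0, ht0]
  · have ht0 : t ≠ 0 := by rintro rfl; simp at hx; exact h0 (by simp [hx])
    have hnorm : ‖(xb : X)‖ = t := by
      rw [hx, norm_smul, hu, mul_one, Real.norm_eq_abs, abs_of_nonneg ht]
    have hunit : (⟨‖(xb : X)‖⁻¹ • (xb : X), unit_mem h0⟩ : sphere (0 : X) 1) = u := by
      apply Subtype.ext
      show ‖(xb : X)‖⁻¹ • (xb : X) = (u : X)
      rw [hnorm, hx, smul_smul, inv_mul_cancel₀ ht0, one_smul]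
    simp only [extFun, dif_neg h0]
    rw [hunit, hnorm]

lemma extFun_unique (F : sphere (0 : X) 1 → sphere (0 : Y) 1)
    (Fbar : closedBall (0 : X) 1 → closedBall (0 : Y) 1)
    (hFbar : ∀ (xb : closedBall (0 : X) 1) (u : sphere (0 : X) 1) (t : ℝ),
      0 ≤ t → (xb : X) = t • (u : X) → (Fbar xb : Y) = t • (F u : Y))
    (hne : Nonempty (sphere (0 : X) 1)) : Fbar = extFun F := by
  funext xb
  apply Subtype.ext
  by_cases h0 : (xb : X) = 0
  · obtain ⟨u⟩ := hne
    rw [hFbar xb u 0 le_rfl (by simp [h0]), extFun_spec F xb u 0 le_rfl (by simp [h0])]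
  · have hu : (xb : X) = ‖(xb : X)‖ • ((⟨‖(xb : X)‖⁻¹ • (xb : X), unit_mem h0⟩ :
        sphere (0 : X) 1) : X) := by
      simp [smul_smul, mul_inv_cancel₀ (norm_ne_zero_iff.mpr h0)]
    rw [hFbar xb _ _ (norm_nonneg _) hu, extFun_spec F xb _ _ (norm_nonneg _) hu]

end UHExt

namespace UHExt

variable {X Y : Type*} [NormedAddCommGroup X] [NormedSpace ℝ X]
  [NormedAddCommGroup Y] [NormedSpace ℝ Y]

lemma extFun_val_ne (F : sphere (0 : X) 1 → sphere (0 : Y) 1)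
    {xb : closedBall (0 : X) 1} (h0 : (xb : X) ≠ 0) :
    (extFun F xb : Y) = ‖(xb : X)‖ • (F ⟨‖(xb : X)‖⁻¹ • (xb : X), unit_mem h0⟩ : Y) := by
  simp only [extFun, dif_neg h0]

lemma extFun_val_zero (F : sphere (0 : X) 1 → sphere (0 : Y) 1)
    {xb : closedBall (0 : X) 1} (h0 : (xb : X) = 0) :
    (extFun F xb : Y) = 0 := by
  simp only [extFun, dif_pos h0]

lemma key_est (F : sphere (0 : X) 1 → sphere (0 : Y) 1) (hF : UniformContinuous F) :
    ∀ ε > 0, ∃ δ > 0, ∀ a b : closedBall (0 : X) 1, ‖(a : X)‖ ≤ ‖(b : X)‖ →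
      dist (a : X) (b : X) < δ → dist (extFun F a : Y) (extFun F b : Y) < ε := by
  intro ε hε
  obtain ⟨δ₁, hδ₁, hFδ⟩ := Metric.uniformContinuous_iff.mp hF (ε / 2) (by positivity)
  refine ⟨min (ε / 2) (ε * δ₁ / 8), by positivity, ?_⟩
  intro a b hts hab
  rw [dist_eq_norm] at hab
  have habε : ‖(a : X) - (b : X)‖ < ε / 2 := lt_of_lt_of_le hab (min_le_left _ _)
  have habδ : ‖(a : X) - (b : X)‖ < ε * δ₁ / 8 := lt_of_lt_of_le hab (min_le_right _ _)
  by_cases hb : (b : X) = 0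
  · have ha : (a : X) = 0 := norm_le_zero_iff.mp
      (hts.trans (le_of_eq (by rw [hb, norm_zero])))
    rw [extFun_val_zero F ha, extFun_val_zero F hb]
    simpa using hε
  by_cases ha : (a : X) = 0
  · rw [extFun_val_zero F ha, extFun_val_ne F hb, dist_eq_norm]
    have h1 : ‖(F ⟨‖(b : X)‖⁻¹ • (b : X), unit_mem hb⟩ : Y)‖ = 1 :=
      mem_sphere_zero_iff_norm.mp (F _).2
    have : ‖(0 : Y) - ‖(b : X)‖ • (F ⟨‖(b : X)‖⁻¹ • (b : X), unit_mem hb⟩ : Y)‖ = ‖(b : X)‖ := by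
      rw [zero_sub, norm_neg, norm_smul, h1, mul_one, norm_norm]
    rw [this]
    have : ‖(b : X)‖ = ‖(a : X) - (b : X)‖ := by rw [ha, zero_sub, norm_neg]
    linarith
  -- main case
  set t := ‖(a : X)‖ with htdef
  set s := ‖(b : X)‖ with hsdef
  have ht0 : 0 < t := norm_pos_iff.mpr ha
  have hs0 : 0 < s := norm_pos_iff.mpr hb
  have ht1 : t ≤ 1 := mem_closedBall_zero_iff.mp a.2
  set u : sphere (0 : X) 1 := ⟨t⁻¹ • (a : X), unit_mem ha⟩ with hudef
  set v : sphere (0 : X) 1 := ⟨s⁻¹ • (b : X), unit_mem hb⟩ with hvdef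
  rw [extFun_val_ne F ha, extFun_val_ne F hb, dist_eq_norm]
  have hFu : ‖(F u : Y)‖ = 1 := mem_sphere_zero_iff_norm.mp (F u).2
  have hFv : ‖(F v : Y)‖ = 1 := mem_sphere_zero_iff_norm.mp (F v).2
  have hst : |t - s| ≤ ‖(a : X) - (b : X)‖ := abs_norm_sub_norm_le _ _
  have hbound : ‖t • (F u : Y) - s • (F v : Y)‖ ≤ t * ‖(F u : Y) - (F v : Y)‖ + |t - s| := by
    calc ‖t • (F u : Y) - s • (F v : Y)‖
        = ‖t • ((F u : Y) - (F v : Y)) + (t - s) • (F v : Y)‖ := by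
          rw [smul_sub, sub_smul]; abel_nf
      _ ≤ ‖t • ((F u : Y) - (F v : Y))‖ + ‖(t - s) • (F v : Y)‖ := norm_add_le _ _
      _ = t * ‖(F u : Y) - (F v : Y)‖ + |t - s| := by
          rw [norm_smul, norm_smul, hFv, mul_one, Real.norm_eq_abs, Real.norm_eq_abs,
            abs_of_nonneg (norm_nonneg _)]
  have hFuv2 : ‖(F u : Y) - (F v : Y)‖ ≤ 2 := by
    calc ‖(F u : Y) - (F v : Y)‖ ≤ ‖(F u : Y)‖ + ‖(F v : Y)‖ := norm_sub_le _ _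
      _ = 2 := by rw [hFu, hFv]; norm_num
  by_cases htsmall : t ≤ ε / 4
  · have : t * ‖(F u : Y) - (F v : Y)‖ ≤ ε / 2 := by nlinarith [norm_nonneg ((F u : Y) - (F v : Y))]
    have habs : |t - s| < ε / 2 := lt_of_le_of_lt hst habε
    linarith
  · push_neg at htsmall
    have huv : ‖(u : X) - (v : X)‖ ≤ 2 * ‖(a : X) - (b : X)‖ / t := by
      have hdecomp : (u : X) - (v : X) = t⁻¹ • ((a : X) - (b : X)) + (t⁻¹ - s⁻¹) • (b : X) := by
        rw [hudef, hvdef]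
        show t⁻¹ • (a : X) - s⁻¹ • (b : X) = _
        rw [smul_sub, sub_smul]
        abel
      rw [hdecomp]
      have h1 : ‖t⁻¹ • ((a : X) - (b : X))‖ = t⁻¹ * ‖(a : X) - (b : X)‖ := by
        rw [norm_smul, Real.norm_eq_abs, abs_of_nonneg (by positivity)]
      have h2 : ‖(t⁻¹ - s⁻¹) • (b : X)‖ = (t⁻¹ - s⁻¹) * s := by
        rw [norm_smul, Real.norm_eq_abs, abs_of_nonneg (by
          have := one_div_le_one_div_of_le ht0 hts
          simp only [one_div] at this
          linarith), ← hsdef]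
      have hstN : s - t ≤ ‖(a : X) - (b : X)‖ := by
        have := neg_abs_le (t - s); linarith
      calc ‖t⁻¹ • ((a : X) - (b : X)) + (t⁻¹ - s⁻¹) • (b : X)‖
          ≤ ‖t⁻¹ • ((a : X) - (b : X))‖ + ‖(t⁻¹ - s⁻¹) • (b : X)‖ := norm_add_le _ _
        _ = t⁻¹ * ‖(a : X) - (b : X)‖ + (t⁻¹ - s⁻¹) * s := by rw [h1, h2]
        _ ≤ 2 * ‖(a : X) - (b : X)‖ / t := by
            have key : t⁻¹ * ‖(a : X) - (b : X)‖ + (t⁻¹ - s⁻¹) * s =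
                (‖(a : X) - (b : X)‖ + (s - t)) / t := by field_simp
            rw [key, div_le_div_iff₀ ht0 ht0]
            nlinarith
    have hduv : dist u v < δ₁ := by
      rw [Subtype.dist_eq, dist_eq_norm]
      have h2N : 2 * ‖(a : X) - (b : X)‖ / t < δ₁ := by
        rw [div_lt_iff₀ ht0]
        nlinarith
      linarith
    have hFuv : ‖(F u : Y) - (F v : Y)‖ < ε / 2 := by
      have := hFδ hduv
      rwa [Subtype.dist_eq, dist_eq_norm] at this
    have h3 : t * ‖(F u : Y) - (F v : Y)‖ < ε / 2 := by
      nlinarith [norm_nonneg ((F u : Y) - (F v : Y))]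
    have habs : |t - s| < ε / 2 := lt_of_le_of_lt hst habε
    linarith

lemma spec_leftInv (F : sphere (0 : X) 1 → sphere (0 : Y) 1)
    (G : sphere (0 : Y) 1 → sphere (0 : X) 1) (hGF : Function.LeftInverse G F)
    (Fbar : closedBall (0 : X) 1 → closedBall (0 : Y) 1)
    (Gbar : closedBall (0 : Y) 1 → closedBall (0 : X) 1)
    (hFbar : ∀ (xb : closedBall (0 : X) 1) (u : sphere (0 : X) 1) (t : ℝ),
      0 ≤ t → (xb : X) = t • (u : X) → (Fbar xb : Y) = t • (F u : Y))
    (hGbar : ∀ (yb : closedBall (0 : Y) 1) (v : sphere (0 : Y) 1) (t : ℝ),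
      0 ≤ t → (yb : Y) = t • (v : Y) → (Gbar yb : X) = t • (G v : X)) :
    Function.LeftInverse Gbar Fbar := by
  intro x
  by_cases hne : Nonempty (sphere (0 : X) 1)
  · apply Subtype.ext
    by_cases h0 : (x : X) = 0
    · obtain ⟨u⟩ := hne
      have h1 : (Fbar x : Y) = (0:ℝ) • (F u : Y) := hFbar x u 0 le_rfl (by simp [h0])
      have h2 : (Gbar (Fbar x) : X) = (0:ℝ) • (G (F u) : X) :=
        hGbar (Fbar x) (F u) 0 le_rfl (by simp [h1])
      simp [h2, h0]
    · set u : sphere (0 : X) 1 := ⟨‖(x : X)‖⁻¹ • (x : X), unit_mem h0⟩ with hu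
      have hx : (x : X) = ‖(x : X)‖ • (u : X) := by
        rw [hu]
        simp [smul_smul, mul_inv_cancel₀ (norm_ne_zero_iff.mpr h0)]
      have h1 : (Fbar x : Y) = ‖(x : X)‖ • (F u : Y) := hFbar x u _ (norm_nonneg _) hx
      have h2 : (Gbar (Fbar x) : X) = ‖(x : X)‖ • (G (F u) : X) :=
        hGbar (Fbar x) (F u) _ (norm_nonneg _) h1
      rw [h2, hGF u, ← hx]
  · apply Subtype.ext
    have hsub : ∀ z : X, z = 0 := by
      intro z; by_contra hz
      exact hne ⟨⟨_, unit_mem hz⟩⟩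
    rw [hsub (Gbar (Fbar x) : X), hsub (x : X)]


end UHExt

namespace UHExt
variable {X Y : Type*} [NormedAddCommGroup X] [NormedSpace ℝ X]
  [NormedAddCommGroup Y] [NormedSpace ℝ Y]

lemma extFun_uc (F : sphere (0 : X) 1 → sphere (0 : Y) 1) (hF : UniformContinuous F) :
    UniformContinuous (extFun F) := by
  rw [Metric.uniformContinuous_iff]
  intro ε hε
  obtain ⟨δ, hδ, hest⟩ := key_est F hF ε hε
  refine ⟨δ, hδ, ?_⟩
  intro a b hab
  rw [Subtype.dist_eq] at hab ⊢
  rcases le_total ‖(a : X)‖ ‖(b : X)‖ with h | h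
  · exact hest a b h hab
  · rw [dist_comm] at hab ⊢
    exact hest b a h hab

end UHExt

/-- If `F : S(X) → S(Y)` is a uniform homeomorphism, then its positively homogeneous
extension `F̄(x) = ‖x‖·F(x/‖x‖)`, `F̄(0) = 0`, is a uniform homeomorphism between the
closed unit balls of `X` and `Y`. -/
theorem uniform_homeomorphism_extends_to_balls
    (X Y : Type*) [NormedAddCommGroup X] [NormedSpace ℝ X]
    [NormedAddCommGroup Y] [NormedSpace ℝ Y]
    (F : Metric.sphere (0 : X) 1 → Metric.sphere (0 : Y) 1)
    (G : Metric.sphere (0 : Y) 1 → Metric.sphere (0 : X) 1)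
    (hGF : Function.LeftInverse G F) (hFG : Function.RightInverse G F)
    (hF : UniformContinuous F) (hG : UniformContinuous G)
    (Fbar : Metric.closedBall (0 : X) 1 → Metric.closedBall (0 : Y) 1)
    (hFbar : ∀ (xb : Metric.closedBall (0 : X) 1) (u : Metric.sphere (0 : X) 1) (t : ℝ),
      0 ≤ t → (xb : X) = t • (u : X) → (Fbar xb : Y) = t • (F u : Y)) :
    Function.Bijective Fbar ∧ UniformContinuous Fbar ∧
      ∃ Gbar : Metric.closedBall (0 : Y) 1 → Metric.closedBall (0 : X) 1,
        Function.LeftInverse Gbar Fbar ∧ Function.RightInverse Gbar Fbar ∧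
        UniformContinuous Gbar := by
  set Gbar : Metric.closedBall (0 : Y) 1 → Metric.closedBall (0 : X) 1 := UHExt.extFun G with hGdef
  have hGbar : ∀ (yb : Metric.closedBall (0 : Y) 1) (v : Metric.sphere (0 : Y) 1) (t : ℝ),
      0 ≤ t → (yb : Y) = t • (v : Y) → (Gbar yb : X) = t • (G v : X) := UHExt.extFun_spec G
  have hL : Function.LeftInverse Gbar Fbar := UHExt.spec_leftInv F G hGF Fbar Gbar hFbar hGbar
  have hR : Function.RightInverse Gbar Fbar := UHExt.spec_leftInv G F hFG Gbar Fbar hGbar hFbar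
  have hGuc : UniformContinuous Gbar := UHExt.extFun_uc G hG
  have hFuc : UniformContinuous Fbar := by
    by_cases hne : Nonempty (Metric.sphere (0 : X) 1)
    · rw [UHExt.extFun_unique F Fbar hFbar hne]
      exact UHExt.extFun_uc F hF
    · -- X is trivial: Fbar is constant
      have hsub : ∀ z : X, z = 0 := by
        intro z; by_contra hz
        exact hne ⟨⟨_, UHExt.unit_mem hz⟩⟩
      have : Fbar = fun _ => Fbar ⟨0, by simp⟩ := by
        funext x
        congr 1
        exact Subtype.ext (by rw [hsub (x : X)])
      rw [this]
      exact uniformContinuous_const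
  exact ⟨⟨hL.injective, hR.surjective⟩, hFuc, Gbar, hL, hR, hGuc⟩
end
end

section
/- Let X be an infinite-dimensional uniformly convex real Banach space and suppose C, D ⊆ S(X) are asymptotic sets with d(C, D) = inf{‖c − d‖ : c ∈ C, d ∈ D} > 0. Then X contains a distortable subspace: there exist a closed infinite-dimensional linear subspace W of X, a constant λ > 1 and an equivalent norm N on W such that for every closed infinite-dimensional linear subspace Y of W, sup{N(y)/N(z) : y, z ∈ Y, ‖y‖ = ‖z‖ = 1} > λ. -/
noncomputable section

/-- A subset `C` of the unit sphere of `X` is asymptotic if every closed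
infinite-dimensional subspace contains unit vectors arbitrarily close to `C`. -/
def IsAsymptotic {X : Type*} [NormedAddCommGroup X] [NormedSpace ℝ X] (C : Set X) : Prop :=
  ∀ Z : Submodule ℝ X, IsClosed (Z : Set X) → ¬ FiniteDimensional ℝ Z →
    ∀ δ : ℝ, 0 < δ → ∃ z ∈ Z, ‖z‖ = 1 ∧ ∃ c ∈ C, ‖z - c‖ < δ

/-- `N` is an equivalent norm on the normed space `X`. -/
def IsEquivNorm {X : Type*} [NormedAddCommGroup X] [NormedSpace ℝ X] (N : X → ℝ) : Prop :=
  (∀ x y : X, N (x + y) ≤ N x + N y) ∧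
  (∀ (a : ℝ) (x : X), N (a • x) = |a| * N x) ∧
  ∃ c C : ℝ, 0 < c ∧ c ≤ C ∧ ∀ x : X, c * ‖x‖ ≤ N x ∧ N x ≤ C * ‖x‖

open Metric Set

namespace SepAsymptotic

variable {E : Type*} [NormedAddCommGroup E] [NormedSpace ℝ E]

variable {G : Set E}

lemma absorbent_K (hb : closedBall (0:E) (1/4) ⊆ G) : Absorbent ℝ (convexHull ℝ G) :=
  (absorbent_ball_zero (by norm_num : (0:ℝ) < 1/4)).mono
    ((ball_subset_closedBall.trans hb).trans (subset_convexHull ℝ G))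

lemma K_subset (hG : G ⊆ closedBall (0:E) 1) : convexHull ℝ G ⊆ closedBall (0:E) 1 :=
  convexHull_min hG (convex_closedBall 0 1)

lemma norm_le_gauge (hG : G ⊆ closedBall (0:E) 1) (hb : closedBall (0:E) (1/4) ⊆ G) (x : E) :
    ‖x‖ ≤ gauge (convexHull ℝ G) x := by
  have h := gauge_mono (absorbent_K hb) (K_subset hG) x
  rwa [gauge_closedBall zero_le_one, div_one] at h

lemma gauge_le_four (hb : closedBall (0:E) (1/4) ⊆ G) (x : E) :
    gauge (convexHull ℝ G) x ≤ 4 * ‖x‖ := by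
  have habs : Absorbent ℝ (closedBall (0:E) (1/4)) :=
    (absorbent_ball_zero (by norm_num : (0:ℝ) < 1/4)).mono ball_subset_closedBall
  have h := gauge_mono habs (hb.trans (subset_convexHull ℝ G)) x
  rw [gauge_closedBall (by norm_num : (0:ℝ) ≤ 1/4)] at h
  calc gauge (convexHull ℝ G) x ≤ ‖x‖ / (1/4) := h
    _ = 4 * ‖x‖ := by ring

lemma K_symm (hsym : ∀ x ∈ G, -x ∈ G) :
    ∀ x ∈ convexHull ℝ G, -x ∈ convexHull ℝ G := by
  have hGG : -G = G := by
    ext x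
    simp only [Set.mem_neg]
    exact ⟨fun h => by simpa using hsym _ h, fun h => hsym _ h⟩
  intro x hx
  have h : -x ∈ -convexHull ℝ G := by simpa using hx
  rwa [← convexHull_neg, hGG] at h

lemma gauge_abs_smul (hsym : ∀ x ∈ G, -x ∈ G) (a : ℝ) (x : E) :
    gauge (convexHull ℝ G) (a • x) = |a| * gauge (convexHull ℝ G) x := by
  rcases le_or_gt 0 a with h | h
  · rw [gauge_smul_of_nonneg h, abs_of_nonneg h, smul_eq_mul]
  · have hax : a • x = -(|a| • x) := by rw [abs_of_neg h, neg_smul, neg_neg]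
    rw [hax, gauge_neg (K_symm hsym), gauge_smul_of_nonneg (abs_nonneg a), smul_eq_mul]

lemma isEquivNorm_gauge (hG : G ⊆ closedBall (0:E) 1)
    (hb : closedBall (0:E) (1/4) ⊆ G) (hsym : ∀ x ∈ G, -x ∈ G) (W : Submodule ℝ E) :
    IsEquivNorm (fun x : W => gauge (convexHull ℝ G) (x : E)) := by
  refine ⟨fun x y => ?_, fun a x => ?_, 1, 4, one_pos, by norm_num, fun x => ⟨?_, ?_⟩⟩
  · have h := gauge_add_le (convex_convexHull ℝ G) (absorbent_K hb) (x : E) (y : E)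
    simpa using h
  · have h := gauge_abs_smul hsym a (x : E)
    simpa using h
  · rw [one_mul, Submodule.coe_norm]
    exact norm_le_gauge hG hb _
  · rw [Submodule.coe_norm]
    exact gauge_le_four hb _

lemma exists_close_conv (hG : G ⊆ closedBall (0:E) 1) (hb : closedBall (0:E) (1/4) ⊆ G)
    {x : E} {t : ℝ} (hx : ‖x‖ = 1) (ht : gauge (convexHull ℝ G) x < t) :
    ∃ p ∈ convexHull ℝ G, ‖x - p‖ ≤ t - 1 := by
  obtain ⟨b, hb0, hbt, hxb⟩ := exists_lt_of_gauge_lt (absorbent_K hb) ht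
  obtain ⟨k, hk, hxk⟩ := hxb
  have hk1 : ‖k‖ ≤ 1 := by
    have h := K_subset hG hk
    simpa [mem_closedBall, dist_zero_right] using h
  have hnx : ‖x‖ = b * ‖k‖ := by
    rw [← hxk, norm_smul, Real.norm_of_nonneg hb0.le]
  have hb1 : 1 ≤ b := by nlinarith [hx, hnx, norm_nonneg k]
  refine ⟨k, hk, ?_⟩
  have hdiff : x - k = (b - 1) • k := by
    rw [← hxk, sub_smul, one_smul]
  rw [hdiff, norm_smul, Real.norm_of_nonneg (by linarith)]
  nlinarith

lemma close_to_S {S : Set E} (hS : S ⊆ sphere (0:E) 1) {δ θ η : ℝ}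
    (huc : ∀ ⦃a : E⦄, ‖a‖ = 1 → ∀ ⦃b : E⦄, ‖b‖ = 1 → θ ≤ ‖a - b‖ → ‖a + b‖ ≤ 2 - δ)
    (hη0 : 0 < η) (hη1 : η ≤ 1/4) (hη2 : 4 * η < δ)
    {x p : E} (hx : ‖x‖ = 1)
    (hp : p ∈ convexHull ℝ (S ∪ closedBall (0:E) (1/4)))
    (hxp : ‖x - p‖ ≤ η) :
    ∃ z ∈ S, ‖x - z‖ < θ := by
  have hpnorm : 1 - η ≤ ‖p‖ := by
    have h := norm_sub_norm_le x p
    linarith [hx ▸ h]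
  have hpne : p ≠ 0 := by
    intro h
    rw [h, norm_zero] at hpnorm
    linarith
  obtain ⟨f, hf1, hfp0⟩ := exists_dual_vector ℝ p (norm_ne_zero_iff.2 hpne)
  have hfp : f p = ‖p‖ := by exact_mod_cast hfp0
  have hfsub : |f x - f p| ≤ ‖x - p‖ := by
    calc |f x - f p| = ‖f (x - p)‖ := by rw [map_sub]; simp [Real.norm_eq_abs]
      _ ≤ ‖f‖ * ‖x - p‖ := f.le_opNorm _
      _ = ‖x - p‖ := by rw [hf1, one_mul]
  have hfx : 1 - 2 * η ≤ f x := by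
    have h1 := (abs_le.1 hfsub).1
    linarith
  obtain ⟨ι, _, w, z, hw0, hw1, hz, hzp⟩ := mem_convexHull_iff_exists_fintype.1 hp
  have hex : ∃ i, 0 < w i ∧ 1 - 2 * η < f (z i) := by
    by_contra hcon
    push_neg at hcon
    have hfple : f p ≤ 1 - 2 * η := by
      have hsum : f p = ∑ i, w i * f (z i) := by
        rw [← hzp, map_sum]
        exact Finset.sum_congr rfl fun i _ => by rw [map_smul]; rfl
      rw [hsum]
      calc ∑ i, w i * f (z i) ≤ ∑ i, w i * (1 - 2*η) := by
            refine Finset.sum_le_sum fun i _ => ?_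
            rcases eq_or_lt_of_le (hw0 i) with h | h
            · rw [← h]; ring_nf; exact le_refl _
            · exact mul_le_mul_of_nonneg_left (hcon i h) (hw0 i)
        _ = 1 - 2*η := by rw [← Finset.sum_mul, hw1, one_mul]
    rw [hfp] at hfple
    linarith
  obtain ⟨i, hwi, hfzi⟩ := hex
  have hziS : z i ∈ S := by
    rcases hz i with h | h
    · exact h
    · exfalso
      simp only [mem_closedBall, dist_zero_right] at h
      have habs := (abs_le.1 (by calc |f (z i)| = ‖f (z i)‖ := (Real.norm_eq_abs _).symm
        _ ≤ ‖f‖ * ‖z i‖ := f.le_opNorm _)).2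
      rw [hf1, one_mul] at habs
      linarith
  have hzi1 : ‖z i‖ = 1 := by
    have h := hS hziS
    simpa [mem_sphere_iff_norm] using h
  refine ⟨z i, hziS, ?_⟩
  by_contra hfar
  push_neg at hfar
  have hucc := huc hx hzi1 hfar
  have hle : f (x + z i) ≤ ‖x + z i‖ := by
    calc f (x + z i) ≤ |f (x + z i)| := le_abs_self _
      _ = ‖f (x + z i)‖ := (Real.norm_eq_abs _).symm
      _ ≤ ‖f‖ * ‖x + z i‖ := f.le_opNorm _
      _ = ‖x + z i‖ := by rw [hf1, one_mul]
  rw [map_add] at hle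
  linarith

lemma map_subtype_closed {W : Submodule ℝ E}
    (hW : IsClosed (W : Set E)) {Y : Submodule ℝ W} (hY : IsClosed (Y : Set W)) :
    IsClosed ((Y.map W.subtype : Submodule ℝ E) : Set E) := by
  rw [Submodule.map_coe, Submodule.coe_subtype]
  exact hW.isClosedMap_subtype_val _ hY

lemma map_subtype_notFD {W : Submodule ℝ E} {Y : Submodule ℝ W}
    (hY : ¬ FiniteDimensional ℝ Y) : ¬ FiniteDimensional ℝ (Y.map W.subtype) := by
  intro h
  haveI := h
  exact hY (Module.Finite.equiv
    (Submodule.equivMapOfInjective W.subtype (Submodule.injective_subtype W) Y).symm)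

lemma sphere_union_neg {S : Set E} (hS : S ⊆ sphere (0:E) 1) :
    (S ∪ -S) ⊆ sphere (0:E) 1 := by
  rintro x (h | h)
  · exact hS h
  · have h2 := hS (Set.mem_neg.1 h)
    simp only [mem_sphere_iff_norm, sub_zero] at h2 ⊢
    rw [← norm_neg]; exact h2

end SepAsymptotic

open SepAsymptotic

set_option maxHeartbeats 2000000 in
set_option synthInstance.maxHeartbeats 1000000 in
/-- If the unit sphere of an infinite-dimensional uniformly convex Banach space contains
two asymptotic sets at positive distance, then `X` contains a distortable subspace. -/
theorem separated_asymptotic_sets_give_distortable_subspace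
    (X : Type*) [NormedAddCommGroup X] [NormedSpace ℝ X] [CompleteSpace X]
    [UniformConvexSpace X] (hX : ¬ FiniteDimensional ℝ X)
    (C D : Set X)
    (hC : C ⊆ Metric.sphere (0 : X) 1) (hD : D ⊆ Metric.sphere (0 : X) 1)
    (hCa : IsAsymptotic C) (hDa : IsAsymptotic D)
    (hsep : ∃ r : ℝ, 0 < r ∧ ∀ c ∈ C, ∀ d ∈ D, r ≤ ‖c - d‖) :
    ∃ W : Submodule ℝ X, IsClosed (W : Set X) ∧ ¬ FiniteDimensional ℝ W ∧
      ∃ lam : ℝ, 1 < lam ∧ ∃ N : W → ℝ, IsEquivNorm N ∧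
        ∀ Y : Submodule ℝ W, IsClosed (Y : Set W) → ¬ FiniteDimensional ℝ Y →
          ∃ y ∈ Y, ∃ z ∈ Y, ‖(y : W)‖ = 1 ∧ ‖(z : W)‖ = 1 ∧ lam * N z < N y := by
  by_contra hcon
  push_neg at hcon
  obtain ⟨r, hr0, hsepr⟩ := hsep
  -- constants
  set θ : ℝ := min (r/8) (1/2) with hθdef
  have hθ0 : 0 < θ := lt_min (by linarith) (by norm_num)
  have hθr : θ ≤ r/8 := min_le_left _ _
  have hθh : θ ≤ 1/2 := min_le_right _ _
  obtain ⟨δ, hδ0, huc⟩ :=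
    exists_forall_sphere_dist_add_le_two_sub X (by positivity : (0:ℝ) < θ/2)
  set η₂ : ℝ := min (δ/5) (min (θ/2) (1/4)) with hη₂def
  have hη₂0 : 0 < η₂ := lt_min (by positivity) (lt_min (by positivity) (by norm_num))
  have hη₂δ : 4 * η₂ < δ := by
    have h := min_le_left (δ/5) (min (θ/2) (1/4)); rw [← hη₂def] at h; linarith
  have hη₂θ : η₂ ≤ θ/2 := le_trans (min_le_right _ _) (min_le_left _ _)
  have hη₂4 : η₂ ≤ 1/4 := le_trans (min_le_right _ _) (min_le_right _ _)
  set η : ℝ := η₂/40 with hηdef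
  have hη0 : 0 < η := by positivity
  have hηθ : η < θ := by
    have : η₂ ≤ θ/2 := hη₂θ
    rw [hηdef]; nlinarith
  have hlam : (1:ℝ) < 1 + η := by linarith
  -- the two symmetric generator sets
  have hG₁sub : ((C ∪ -C) ∪ closedBall (0:X) (1/4)) ⊆ closedBall (0:X) 1 :=
    union_subset ((sphere_union_neg hC).trans sphere_subset_closedBall)
      (closedBall_subset_closedBall (by norm_num))
  have hG₂sub : ((D ∪ -D) ∪ closedBall (0:X) (1/4)) ⊆ closedBall (0:X) 1 :=
    union_subset ((sphere_union_neg hD).trans sphere_subset_closedBall)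
      (closedBall_subset_closedBall (by norm_num))
  have hG₁b : closedBall (0:X) (1/4) ⊆ ((C ∪ -C) ∪ closedBall (0:X) (1/4)) :=
    subset_union_right
  have hG₂b : closedBall (0:X) (1/4) ⊆ ((D ∪ -D) ∪ closedBall (0:X) (1/4)) :=
    subset_union_right
  have hsymgen : ∀ (S : Set X), ∀ x ∈ ((S ∪ -S) ∪ closedBall (0:X) (1/4)),
      -x ∈ ((S ∪ -S) ∪ closedBall (0:X) (1/4)) := by
    rintro S x (h | h)
    · left
      rcases h with h | h
      · right; exact Set.neg_mem_neg.2 h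
      · left; exact Set.mem_neg.1 h
    · right
      simp only [mem_closedBall, dist_zero_right] at h ⊢
      rwa [norm_neg]
  have hG₁sym := hsymgen C
  have hG₂sym := hsymgen D
  -- the first stabilized subspace
  have htopcl : IsClosed ((⊤ : Submodule ℝ X) : Set X) := by
    rw [Submodule.top_coe]; exact isClosed_univ
  have htopfd : ¬ FiniteDimensional ℝ (⊤ : Submodule ℝ X) := by
    intro h
    haveI := h
    exact hX (Module.Finite.equiv (Submodule.topEquiv (R := ℝ) (M := X)))
  obtain ⟨Y₁, hY₁cl, hY₁fd, hY₁st⟩ := hcon ⊤ htopcl htopfd (1+η) hlam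
    (fun x : (⊤ : Submodule ℝ X) =>
      gauge (convexHull ℝ ((C ∪ -C) ∪ closedBall (0:X) (1/4))) (x : X))
    (isEquivNorm_gauge hG₁sub hG₁b hG₁sym ⊤)
  have hZ₁cl : IsClosed ((Y₁.map (⊤ : Submodule ℝ X).subtype : Submodule ℝ X) : Set X) :=
    map_subtype_closed htopcl hY₁cl
  have hZ₁fd : ¬ FiniteDimensional ℝ (Y₁.map (⊤ : Submodule ℝ X).subtype) :=
    map_subtype_notFD hY₁fd
  set Z₁ : Submodule ℝ X := Y₁.map (⊤ : Submodule ℝ X).subtype with hZ₁def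
  have hst₁ : ∀ x ∈ Z₁, ∀ x' ∈ Z₁, ‖x‖ = 1 → ‖x'‖ = 1 →
      gauge (convexHull ℝ ((C ∪ -C) ∪ closedBall (0:X) (1/4))) x ≤
      (1+η) * gauge (convexHull ℝ ((C ∪ -C) ∪ closedBall (0:X) (1/4))) x' := by
    intro x hx x' hx' h1 h1'
    rw [hZ₁def] at hx hx'
    obtain ⟨y, hy, rfl⟩ := Submodule.mem_map.1 hx
    obtain ⟨y', hy', rfl⟩ := Submodule.mem_map.1 hx'
    have h := hY₁st y hy y' hy'
      (by rw [Submodule.coe_norm]; exact h1) (by rw [Submodule.coe_norm]; exact h1')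
    simpa using h
  -- the second stabilized subspace
  obtain ⟨Y₂, hY₂cl, hY₂fd, hY₂st⟩ := hcon Z₁ hZ₁cl hZ₁fd (1+η) hlam
    (fun x : Z₁ =>
      gauge (convexHull ℝ ((D ∪ -D) ∪ closedBall (0:X) (1/4))) (x : X))
    (isEquivNorm_gauge hG₂sub hG₂b hG₂sym Z₁)
  have hZ₂cl : IsClosed ((Y₂.map Z₁.subtype : Submodule ℝ X) : Set X) :=
    map_subtype_closed hZ₁cl hY₂cl
  have hZ₂fd : ¬ FiniteDimensional ℝ (Y₂.map Z₁.subtype) := map_subtype_notFD hY₂fd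
  set Z₂ : Submodule ℝ X := Y₂.map Z₁.subtype with hZ₂def
  have hZ₂le : Z₂ ≤ Z₁ := Submodule.map_subtype_le _ _
  have hst₂ : ∀ x ∈ Z₂, ∀ x' ∈ Z₂, ‖x‖ = 1 → ‖x'‖ = 1 →
      gauge (convexHull ℝ ((D ∪ -D) ∪ closedBall (0:X) (1/4))) x ≤
      (1+η) * gauge (convexHull ℝ ((D ∪ -D) ∪ closedBall (0:X) (1/4))) x' := by
    intro x hx x' hx' h1 h1'
    rw [hZ₂def] at hx hx'
    obtain ⟨y, hy, rfl⟩ := Submodule.mem_map.1 hx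
    obtain ⟨y', hy', rfl⟩ := Submodule.mem_map.1 hx'
    have h := hY₂st y hy y' hy'
      (by rw [Submodule.coe_norm]; exact h1) (by rw [Submodule.coe_norm]; exact h1')
    simpa using h
  -- unit vectors close to C and D in Z₂
  obtain ⟨u, huZ, hu1, c, hcC, hucl⟩ := hCa Z₂ hZ₂cl hZ₂fd η hη0
  obtain ⟨v, hvZ, hv1, d, hdD, hvcl⟩ := hDa Z₂ hZ₂cl hZ₂fd η hη0
  -- norm bounds
  have hNu : gauge (convexHull ℝ ((C ∪ -C) ∪ closedBall (0:X) (1/4))) u ≤ 1 + 4*η := by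
    have h1 : gauge (convexHull ℝ ((C ∪ -C) ∪ closedBall (0:X) (1/4))) c ≤ 1 :=
      gauge_le_one_of_mem (subset_convexHull ℝ _ (Or.inl (Or.inl hcC)))
    have h2 : gauge (convexHull ℝ ((C ∪ -C) ∪ closedBall (0:X) (1/4))) (u - c) ≤ 4 * ‖u - c‖ :=
      gauge_le_four hG₁b _
    have h3 := gauge_add_le (convex_convexHull ℝ _) (absorbent_K hG₁b) c (u - c)
    rw [add_sub_cancel] at h3
    have h4 : ‖u - c‖ ≤ η := le_of_lt hucl
    linarith
  have hNv : gauge (convexHull ℝ ((D ∪ -D) ∪ closedBall (0:X) (1/4))) v ≤ 1 + 4*η := by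
    have h1 : gauge (convexHull ℝ ((D ∪ -D) ∪ closedBall (0:X) (1/4))) d ≤ 1 :=
      gauge_le_one_of_mem (subset_convexHull ℝ _ (Or.inl (Or.inl hdD)))
    have h2 : gauge (convexHull ℝ ((D ∪ -D) ∪ closedBall (0:X) (1/4))) (v - d) ≤ 4 * ‖v - d‖ :=
      gauge_le_four hG₂b _
    have h3 := gauge_add_le (convex_convexHull ℝ _) (absorbent_K hG₂b) d (v - d)
    rw [add_sub_cancel] at h3
    have h4 : ‖v - d‖ ≤ η := le_of_lt hvcl
    linarith
  have hbound₁ : ∀ x ∈ Z₂, ‖x‖ = 1 →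
      gauge (convexHull ℝ ((C ∪ -C) ∪ closedBall (0:X) (1/4))) x < 1 + η₂/4 := by
    intro x hx hx1
    have h := hst₁ x (hZ₂le hx) u (hZ₂le huZ) hx1 hu1
    have hg0 : 0 ≤ gauge (convexHull ℝ ((C ∪ -C) ∪ closedBall (0:X) (1/4))) u :=
      gauge_nonneg _
    nlinarith [hη₂0, hη₂4]
  have hbound₂ : ∀ x ∈ Z₂, ‖x‖ = 1 →
      gauge (convexHull ℝ ((D ∪ -D) ∪ closedBall (0:X) (1/4))) x < 1 + η₂/4 := by
    intro x hx hx1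
    have h := hst₂ x hx v hvZ hx1 hv1
    have hg0 : 0 ≤ gauge (convexHull ℝ ((D ∪ -D) ∪ closedBall (0:X) (1/4))) v :=
      gauge_nonneg _
    nlinarith [hη₂0, hη₂4]
  -- every unit vector of Z₂ is close to C ∪ -C and to D ∪ -D
  have hclose₁ : ∀ x ∈ Z₂, ‖x‖ = 1 → ∃ z ∈ C ∪ -C, ‖x - z‖ < θ/2 := by
    intro x hx hx1
    obtain ⟨p, hp, hxp⟩ := exists_close_conv hG₁sub hG₁b hx1 (hbound₁ x hx hx1)
    have hxp' : ‖x - p‖ ≤ η₂ := by linarith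
    exact close_to_S (sphere_union_neg hC) huc hη₂0 hη₂4 hη₂δ hx1 hp hxp'
  have hclose₂ : ∀ x ∈ Z₂, ‖x‖ = 1 → ∃ z ∈ D ∪ -D, ‖x - z‖ < θ/2 := by
    intro x hx hx1
    obtain ⟨p, hp, hxp⟩ := exists_close_conv hG₂sub hG₂b hx1 (hbound₂ x hx hx1)
    have hxp' : ‖x - p‖ ≤ η₂ := by linarith
    exact close_to_S (sphere_union_neg hD) huc hη₂0 hη₂4 hη₂δ hx1 hp hxp'
  -- the sphere of Z₂ is connected
  have hrank : 1 < Module.rank ℝ Z₂ := by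
    by_contra hle
    push_neg at hle
    exact hZ₂fd (Module.rank_lt_aleph0_iff.1 (lt_of_le_of_lt hle Cardinal.one_lt_aleph0))
  have hconn : IsPreconnected (Subtype.val '' (sphere (0 : Z₂) 1) : Set X) :=
    ((isConnected_sphere hrank 0 zero_le_one).isPreconnected).image _
      continuous_subtype_val.continuousOn
  -- the two separated relatively open pieces
  have hUopen : IsOpen {x : X | infDist x C < θ ∧ infDist x (-D) < θ} :=
    ((isOpen_lt (continuous_infDist_pt C) continuous_const).and
      (isOpen_lt (continuous_infDist_pt (-D)) continuous_const))
  have hVopen : IsOpen {x : X | infDist x (-C) < θ ∧ infDist x D < θ} :=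
    ((isOpen_lt (continuous_infDist_pt (-C)) continuous_const).and
      (isOpen_lt (continuous_infDist_pt D) continuous_const))
  have htri : ∀ a b x : X, ‖a - b‖ ≤ ‖a - x‖ + ‖x - b‖ := by
    intro a b x
    have h := norm_add_le (a - x) (x - b)
    rwa [sub_add_sub_cancel] at h
  have hcover : (Subtype.val '' (sphere (0 : Z₂) 1) : Set X) ⊆
      {x : X | infDist x C < θ ∧ infDist x (-D) < θ} ∪
      {x : X | infDist x (-C) < θ ∧ infDist x D < θ} := by
    rintro x ⟨y, hy, rfl⟩
    have hyZ : (y : X) ∈ Z₂ := y.2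
    have hy1 : ‖(y : X)‖ = 1 := by
      have h := mem_sphere_zero_iff_norm.1 hy
      rwa [Submodule.coe_norm] at h
    obtain ⟨z₁, hz₁, hd₁⟩ := hclose₁ _ hyZ hy1
    obtain ⟨z₂, hz₂, hd₂⟩ := hclose₂ _ hyZ hy1
    have hd₁' : ‖z₁ - (y:X)‖ < θ/2 := by rwa [norm_sub_rev]
    have hd₂' : ‖z₂ - (y:X)‖ < θ/2 := by rwa [norm_sub_rev]
    rcases hz₁ with hz₁ | hz₁
    · rcases hz₂ with hz₂ | hz₂
      · exfalso
        have hrr := hsepr z₁ hz₁ z₂ hz₂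
        have h := htri z₁ z₂ (y : X)
        have : ‖(y:X) - z₂‖ < θ/2 := hd₂
        linarith
      · left
        constructor
        · calc infDist ((y:X)) C ≤ dist ((y:X)) z₁ := infDist_le_dist_of_mem hz₁
            _ < θ := by rw [dist_eq_norm]; linarith
        · calc infDist ((y:X)) (-D) ≤ dist ((y:X)) z₂ := infDist_le_dist_of_mem hz₂
            _ < θ := by rw [dist_eq_norm]; linarith
    · rcases hz₂ with hz₂ | hz₂
      · right
        constructor
        · calc infDist ((y:X)) (-C) ≤ dist ((y:X)) z₁ := infDist_le_dist_of_mem hz₁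
            _ < θ := by rw [dist_eq_norm]; linarith
        · calc infDist ((y:X)) D ≤ dist ((y:X)) z₂ := infDist_le_dist_of_mem hz₂
            _ < θ := by rw [dist_eq_norm]; linarith
      · exfalso
        have hrr := hsepr (-z₁) (Set.mem_neg.1 hz₁) (-z₂) (Set.mem_neg.1 hz₂)
        rw [neg_sub_neg] at hrr
        have h := htri z₂ z₁ (y : X)
        linarith
  -- the two pieces are nonempty on the sphere of Z₂
  have huS : u ∈ (Subtype.val '' (sphere (0 : Z₂) 1) : Set X) := by
    refine ⟨⟨u, huZ⟩, ?_, rfl⟩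
    rw [mem_sphere_zero_iff_norm, Submodule.coe_norm]
    exact hu1
  have hvS : v ∈ (Subtype.val '' (sphere (0 : Z₂) 1) : Set X) := by
    refine ⟨⟨v, hvZ⟩, ?_, rfl⟩
    rw [mem_sphere_zero_iff_norm, Submodule.coe_norm]
    exact hv1
  have huU : u ∈ {x : X | infDist x C < θ ∧ infDist x (-D) < θ} := by
    constructor
    · calc infDist u C ≤ dist u c := infDist_le_dist_of_mem hcC
        _ < θ := by rw [dist_eq_norm]; linarith
    · obtain ⟨z₂, hz₂, hd₂⟩ := hclose₂ u huZ hu1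
      rcases hz₂ with hz₂ | hz₂
      · exfalso
        have hrr := hsepr c hcC z₂ hz₂
        have h := htri c z₂ u
        have h2 : ‖c - u‖ < η := by rwa [norm_sub_rev] at hucl
        linarith
      · calc infDist u (-D) ≤ dist u z₂ := infDist_le_dist_of_mem hz₂
          _ < θ := by rw [dist_eq_norm]; linarith
  have hvV : v ∈ {x : X | infDist x (-C) < θ ∧ infDist x D < θ} := by
    constructor
    · obtain ⟨z₁, hz₁, hd₁⟩ := hclose₁ v hvZ hv1
      rcases hz₁ with hz₁ | hz₁
      · exfalso
        have hrr := hsepr z₁ hz₁ d hdD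
        have h := htri z₁ d v
        have h2 : ‖z₁ - v‖ < θ/2 := by rwa [norm_sub_rev] at hd₁
        linarith
      · calc infDist v (-C) ≤ dist v z₁ := infDist_le_dist_of_mem hz₁
          _ < θ := by rw [dist_eq_norm]; linarith
    · calc infDist v D ≤ dist v d := infDist_le_dist_of_mem hdD
        _ < θ := by rw [dist_eq_norm]; linarith
  -- contradiction from preconnectedness
  obtain ⟨x, hxS, hxU, hxV⟩ := hconn _ _ hUopen hVopen hcover ⟨u, huS, huU⟩ ⟨v, hvS, hvV⟩
  obtain ⟨c', hc', hcd'⟩ := (infDist_lt_iff ⟨c, hcC⟩).1 hxU.1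
  obtain ⟨d', hd', hdd'⟩ := (infDist_lt_iff ⟨d, hdD⟩).1 hxV.2
  have hrr := hsepr c' hc' d' hd'
  have h1 : dist c' d' ≤ dist c' x + dist x d' := dist_triangle _ _ _
  rw [dist_comm c' x] at h1
  have h2 : dist c' d' = ‖c' - d'‖ := dist_eq_norm _ _
  linarith
end
end
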